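/- Let D be a positive integer and d_1, d_2, d_3 integers with d_1 + d_2 + d_3 = D. Let R = ℂ[z_1,z_2,z_3] with the (1/D)Z-grading deg z_i = 2d_i/D, let W = z_1z_2z_3, and for i = 1,2,3 (indices mod 3) let T_i be the (1/D)Z-graded matrix factorization of W given by R →(z_{i+1}z_{i+2}) R[1−2d_i/D] →(z_i) R. Let C_{d_1,d_2,d_3} be the full (1/D)Z-graded DG subcategory of matrix factorizations of W with objects T_1, T_2, T_3, and H*(C_{d_1,d_2,d_3}) its cohomology category. Set p_i = 2d_i + 2d_{i+1} − D and q_i = 2d_{i−2} + 2d_{i−1} − D (indices mod 3), and p̃_i = p_i/D, q̃_i = q_i/D. Then there is an equivalence of (1/D)Z-graded categories A_{(p̃,q̃)} ≅ H*(C_{d_1,d_2,d_3}) sending X_i to T_i, sending u_{i−1,i} to the class of the odd closed morphism T_{i−1} → T_i with components (multiplication by z_{i+1}, multiplication by −1), and sending v_{i,i−1} to the class of the odd closed morphism T_i → T_{i−1} with components (multiplication by z_{i−2}, multiplication by −1). -/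

import Mathlib

noncomputable section ACat

namespace ACat

/- The category `A` (for `n ≥ 3`) is modelled concretely as follows.  Objects are
`X_i`, `i ∈ ZMod n`.  The morphisms `X_i → X_j` have a basis consisting of the
nonzero alternating words in the generators `u_{·,·+1}`, `v_{·,·-1}`; a basis word
starting at the vertex `i` is encoded by an integer code `m`:
`m > 0` encodes the alternating word of length `m` whose first (rightmost) letter is
a `v`, `m < 0` encodes the word of length `-m` whose first letter is a `u`, and
`m = 0` encodes the identity.  Thus `x_i^a` has code `2a`, `y_i^a` has code `-2a`,
`v_{i,i-1} x_i^a` has code `2a+1` and `x_{i+1}^a u_{i,i+1}` has code `-(2a+1)`. -/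

variable (n : ℕ)

/-- The endpoint of the word with code `m` starting at vertex `i`. -/
def tau (i : ZMod n) (m : ℤ) : ZMod n :=
  if m % 2 = 0 then i else if 0 < m then i - 1 else i + 1

/-- Whether the last (leftmost) letter of the (nonempty) word with code `m` is a `v`. -/
def leftv (m : ℤ) : Prop := (0 < m ∧ m % 2 ≠ 0) ∨ (m < 0 ∧ m % 2 = 0)

instance (m : ℤ) : Decidable (leftv m) := by unfold leftv; infer_instance

/-- Composition of basis words at the level of codes: `cmul m₂ m₁` is the code of
`w₂ ∘ w₁` (`w₁` applied first), or `none` if the concatenated word is not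
alternating (in which case the composition is zero in `A`). -/
def cmul (m₂ m₁ : ℤ) : Option ℤ :=
  if m₁ = 0 then some m₂
  else if m₂ = 0 then some m₁
  else if (0 < m₂) ↔ ¬ leftv m₁ then
    some (if 0 < m₁ then m₁ + (m₂.natAbs : ℤ) else m₁ - (m₂.natAbs : ℤ))
  else none

variable (k : Type) [Field k]

/-- The space of morphisms `X_i → X_j` of `A`: the free `k`-module on the codes of
words from `i` to `j`. -/
abbrev AHom (i j : ZMod n) : Type := {c : ℤ // tau n i c = j} →₀ k

/-- Auxiliary: the basis morphism of an optional code. -/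
def obm (i j : ZMod n) : Option ℤ → AHom n k i j
  | none => 0
  | some r => if h : tau n i r = j then Finsupp.single ⟨r, h⟩ 1 else 0

/-- The basis-level composition. -/
def bm (i j : ZMod n) (m₂ m₁ : ℤ) : AHom n k i j := obm n k i j (cmul m₂ m₁)

/-- Composition in `A` (bilinear extension of `bm`). -/
def Acomp {i j l : ZMod n} (g : AHom n k j l) (f : AHom n k i j) : AHom n k i l :=
  f.sum fun m₁ c₁ => g.sum fun m₂ c₂ => (c₂ * c₁) • bm n k i l m₂.1 m₁.1

/-- The identity of `X_i` (the word of code `0`). -/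
def Aid (i : ZMod n) : AHom n k i i :=
  Finsupp.single ⟨0, by simp [tau]⟩ 1


variable {n k}

lemma tau_zero (i : ZMod n) : tau n i 0 = i := by simp [tau]

/-- Endpoint compatibility of the code-level composition. -/
lemma tau_cmul {m₂ m₁ r : ℤ} (i : ZMod n) (h : cmul m₂ m₁ = some r) :
    tau n i r = tau n (tau n i m₁) m₂ := by
  unfold cmul at h
  by_cases h1 : m₁ = 0
  · rw [if_pos h1] at h
    obtain rfl : m₂ = r := by injection h
    subst h1; simp [tau]
  rw [if_neg h1] at h
  by_cases h2 : m₂ = 0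
  · rw [if_pos h2] at h
    obtain rfl : m₁ = r := by injection h
    subst h2; simp [tau]
  rw [if_neg h2] at h
  by_cases h3 : (0 < m₂) ↔ ¬ leftv m₁
  · rw [if_pos h3] at h
    obtain rfl : (if 0 < m₁ then m₁ + (m₂.natAbs : ℤ) else m₁ - (m₂.natAbs : ℤ)) = r := by
      injection h
    unfold leftv at h3
    unfold tau
    split_ifs <;> (first | rfl | (exfalso; omega) | ring)
  · rw [if_neg h3] at h; exact absurd h (by simp)


lemma Acomp_zero_right {i j l : ZMod n} (g : AHom n k j l) :
    Acomp n k g (0 : AHom n k i j) = 0 := by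
  simp [Acomp]

lemma Acomp_zero_left {i j l : ZMod n} (f : AHom n k i j) :
    Acomp n k (0 : AHom n k j l) f = 0 := by
  simp [Acomp]

lemma Acomp_add_left {i j l : ZMod n} (g g' : AHom n k j l) (f : AHom n k i j) :
    Acomp n k (g + g') f = Acomp n k g f + Acomp n k g' f := by
  unfold Acomp
  rw [← Finsupp.sum_add]
  refine Finsupp.sum_congr fun m₁ _ => ?_
  rw [Finsupp.sum_add_index' (fun m₂ => by simp) (fun m₂ c c' => by rw [add_mul, add_smul])]

lemma Acomp_add_right {i j l : ZMod n} (g : AHom n k j l) (f f' : AHom n k i j) :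
    Acomp n k g (f + f') = Acomp n k g f + Acomp n k g f' := by
  unfold Acomp
  rw [Finsupp.sum_add_index' (fun m₁ => by simp) (fun m₁ c c' => ?_)]
  rw [← Finsupp.sum_add]
  refine Finsupp.sum_congr fun m₂ _ => ?_
  rw [mul_add, add_smul]

lemma Acomp_smul_left {i j l : ZMod n} (c : k) (g : AHom n k j l) (f : AHom n k i j) :
    Acomp n k (c • g) f = c • Acomp n k g f := by
  unfold Acomp
  rw [Finsupp.smul_sum]
  refine Finsupp.sum_congr fun m₁ _ => ?_
  rw [Finsupp.sum_smul_index' (fun m₂ => by simp), Finsupp.smul_sum]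
  refine Finsupp.sum_congr fun m₂ _ => ?_
  simp only [smul_eq_mul, smul_smul]
  congr 1
  ring

lemma Acomp_smul_right {i j l : ZMod n} (c : k) (g : AHom n k j l) (f : AHom n k i j) :
    Acomp n k g (c • f) = c • Acomp n k g f := by
  unfold Acomp
  rw [Finsupp.sum_smul_index' (fun m₁ => by simp), Finsupp.smul_sum]
  refine Finsupp.sum_congr fun m₁ _ => ?_
  rw [Finsupp.smul_sum]
  refine Finsupp.sum_congr fun m₂ _ => ?_
  simp only [smul_eq_mul, smul_smul]
  congr 1
  ring

lemma Acomp_single_single {i j l : ZMod n} (b₂ : {c : ℤ // tau n j c = l})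
    (b₁ : {c : ℤ // tau n i c = j}) (c₂ c₁ : k) :
    Acomp n k (Finsupp.single b₂ c₂) (Finsupp.single b₁ c₁)
      = (c₂ * c₁) • bm n k i l b₂.1 b₁.1 := by
  unfold Acomp
  rw [Finsupp.sum_single_index (by simp), Finsupp.sum_single_index (by simp)]

lemma cmul_zero_right (m : ℤ) : cmul m 0 = some m := by simp [cmul]

lemma cmul_zero_left (m : ℤ) : cmul 0 m = some m := by
  unfold cmul
  split_ifs with h1 h2 <;> simp_all

lemma Aid_comp {i j : ZMod n} (f : AHom n k i j) : Acomp n k (Aid n k j) f = f := by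
  unfold Acomp Aid
  conv_rhs => rw [← f.sum_single]
  refine Finsupp.sum_congr fun m₁ hm₁ => ?_
  rw [Finsupp.sum_single_index (by simp)]
  rw [one_mul, bm, cmul_zero_left, obm]
  rw [dif_pos m₁.2]
  simp

lemma Acomp_id {i j : ZMod n} (f : AHom n k i j) : Acomp n k f (Aid n k i) = f := by
  unfold Acomp Aid
  rw [Finsupp.sum_single_index (by simp)]
  conv_rhs => rw [← f.sum_single]
  refine Finsupp.sum_congr fun m₂ hm₂ => ?_
  rw [mul_one, bm, cmul_zero_right, obm]
  rw [dif_pos m₂.2]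
  simp


@[simp] lemma obm_none (i j : ZMod n) : obm n k i j none = 0 := rfl

lemma obm_some (i j : ZMod n) (r : ℤ) :
    obm n k i j (some r)
      = if h : tau n i r = j then Finsupp.single ⟨r, h⟩ (1 : k) else 0 := rfl

set_option maxHeartbeats 1000000 in
lemma cmul_assoc (m₃ m₂ m₁ : ℤ) :
    (cmul m₃ m₂).bind (fun r => cmul r m₁) = (cmul m₂ m₁).bind (fun r => cmul m₃ r) := by
  by_cases h1 : m₁ = 0
  · subst h1; simp [cmul_zero_right]
  by_cases h2 : m₂ = 0
  · subst h2; simp [cmul_zero_left, cmul_zero_right]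
  by_cases h3 : m₃ = 0
  · subst h3; simp [cmul_zero_left]
  simp only [cmul, leftv, iff_iff_and_or_not_and_not]
  split_ifs <;>
    (try simp only [Option.bind_none, Option.bind_some]) <;>
    (try split_ifs) <;>
    (first | rfl | (exfalso; omega) | (congr 1; omega) | omega)

lemma bm_assoc {i j l w : ZMod n} (b₁ : {c : ℤ // tau n i c = j})
    (b₂ : {c : ℤ // tau n j c = l}) (b₃ : {c : ℤ // tau n l c = w}) :
    Acomp n k (bm n k j w b₃.1 b₂.1) (Finsupp.single b₁ 1) =
      Acomp n k (Finsupp.single b₃ 1) (bm n k i l b₂.1 b₁.1) := by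
  have hmain := cmul_assoc b₃.1 b₂.1 b₁.1
  unfold bm
  rcases ho : cmul b₃.1 b₂.1 with _ | r
  · rcases ho' : cmul b₂.1 b₁.1 with _ | r'
    · rw [obm_none, obm_none, Acomp_zero_left, Acomp_zero_right]
    · rw [obm_none, Acomp_zero_left, obm_some]
      have ht : tau n i r' = l := by rw [tau_cmul i ho', b₁.2, b₂.2]
      rw [dif_pos ht, Acomp_single_single, one_mul, one_smul]
      unfold bm
      have hnone : cmul b₃.1 r' = none := by
        rw [ho, ho'] at hmain; simpa using hmain.symm
      rw [hnone, obm_none]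
  · have ht : tau n j r = w := by rw [tau_cmul j ho, b₂.2, b₃.2]
    rw [obm_some, dif_pos ht, Acomp_single_single, one_mul, one_smul]
    rcases ho' : cmul b₂.1 b₁.1 with _ | r'
    · rw [obm_none, Acomp_zero_right]
      unfold bm
      have hnone : cmul r b₁.1 = none := by rw [ho, ho'] at hmain; simpa using hmain
      rw [hnone, obm_none]
    · have ht' : tau n i r' = l := by rw [tau_cmul i ho', b₁.2, b₂.2]
      rw [obm_some, dif_pos ht', Acomp_single_single, one_mul, one_smul]
      unfold bm
      have heq : cmul r b₁.1 = cmul b₃.1 r' := by rw [ho, ho'] at hmain; simpa using hmain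
      rw [heq]

theorem Acomp_assoc {i j l w : ZMod n} (h : AHom n k l w) (g : AHom n k j l)
    (f : AHom n k i j) :
    Acomp n k (Acomp n k h g) f = Acomp n k h (Acomp n k g f) := by
  induction f using Finsupp.induction_linear with
  | zero => rw [Acomp_zero_right, Acomp_zero_right, Acomp_zero_right]
  | add f f' hf hf' =>
      rw [Acomp_add_right, Acomp_add_right, Acomp_add_right, hf, hf']
  | single b₁ c₁ =>
    induction g using Finsupp.induction_linear with
    | zero => rw [Acomp_zero_right, Acomp_zero_left, Acomp_zero_left, Acomp_zero_right]
    | add g g' hg hg' =>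
        rw [Acomp_add_right, Acomp_add_left, Acomp_add_left, Acomp_add_right, hg, hg']
    | single b₂ c₂ =>
      induction h using Finsupp.induction_linear with
      | zero => rw [Acomp_zero_left, Acomp_zero_left, Acomp_zero_left]
      | add h h' hh hh' =>
          rw [Acomp_add_left, Acomp_add_left, Acomp_add_left, hh, hh']
      | single b₃ c₃ =>
        have e₁ : (Finsupp.single b₁ c₁ : AHom n k i j) = c₁ • Finsupp.single b₁ 1 := by
          rw [Finsupp.smul_single, smul_eq_mul, mul_one]
        have e₃ : (Finsupp.single b₃ c₃ : AHom n k l w) = c₃ • Finsupp.single b₃ 1 := by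
          rw [Finsupp.smul_single, smul_eq_mul, mul_one]
        rw [Acomp_single_single, Acomp_single_single, Acomp_smul_left, Acomp_smul_right,
          e₁, e₃, Acomp_smul_right, Acomp_smul_left, bm_assoc b₁ b₂ b₃,
          smul_smul, smul_smul]
        congr 1
        ring


/-- The degree of the basis word with code `m` starting at vertex `i`, for the grading
of `A` determined by `deg u_{i-1,i} = p i` and `deg v_{i,i-1} = q i`.  (A word with
code `m > 0` consists of the letters `v_{i,i-1}, u_{i-1,i}, v_{i,i-1}, …` (`m` of
them), a word with code `m < 0` of the letters `u_{i,i+1}, v_{i+1,i}, …`.) -/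
def deg (p q : ZMod n → ℤ) (i : ZMod n) (m : ℤ) : ℤ :=
  if 0 < m then
    (((m.natAbs + 1) / 2 : ℕ) : ℤ) * q i + ((m.natAbs / 2 : ℕ) : ℤ) * p i
  else
    (((m.natAbs + 1) / 2 : ℕ) : ℤ) * p (i + 1) + ((m.natAbs / 2 : ℕ) : ℤ) * q (i + 1)

private lemma lin1 {a b c d e f : ℤ} (Q P : ℤ) (h1 : a = c + e) (h2 : b = d + f) :
    a * Q + b * P = c * Q + d * P + (e * Q + f * P) := by subst h1; subst h2; ring

private lemma lin2 {a b c d e f : ℤ} (Q P : ℤ) (h1 : a = c + f) (h2 : b = d + e) :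
    a * Q + b * P = c * Q + d * P + (e * P + f * Q) := by subst h1; subst h2; ring

set_option maxHeartbeats 1000000 in
/-- Additivity of degrees under composition of basis words. -/
lemma deg_cmul (p q : ZMod n → ℤ) {m₂ m₁ r : ℤ} (i : ZMod n)
    (h : cmul m₂ m₁ = some r) :
    deg p q i r = deg p q i m₁ + deg p q (tau n i m₁) m₂ := by
  unfold cmul at h
  by_cases h1 : m₁ = 0
  · rw [if_pos h1] at h
    obtain rfl : m₂ = r := by injection h
    subst h1
    simp [deg, tau]
  rw [if_neg h1] at h
  by_cases h2 : m₂ = 0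
  · rw [if_pos h2] at h
    obtain rfl : m₁ = r := by injection h
    subst h2
    simp [deg, tau]
  rw [if_neg h2] at h
  by_cases h3 : (0 < m₂) ↔ ¬ leftv m₁
  · rw [if_pos h3] at h
    obtain rfl : (if 0 < m₁ then m₁ + (m₂.natAbs : ℤ) else m₁ - (m₂.natAbs : ℤ)) = r := by
      injection h
    unfold leftv at h3
    unfold deg tau
    split_ifs <;>
      (try simp only [sub_add_cancel]) <;>
      (first
        | rfl
        | (exfalso; omega)
        | exact lin1 _ _ (by omega) (by omega)
        | exact lin2 _ _ (by omega) (by omega))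
  · rw [if_neg h3] at h; exact absurd h (by simp)


/-- For any "degree" function `σ` on the index set of a free module, the submodules
spanned by the basis elements of each fixed degree form an internal direct sum
decomposition. -/
lemma isInternal_supported {α Γ : Type} [DecidableEq Γ] (σ : α → Γ) :
    DirectSum.IsInternal
      (fun γ : Γ => Finsupp.supported k k {b : α | σ b = γ}) := by
  rw [DirectSum.isInternal_submodule_iff_iSupIndep_and_iSup_eq_top]
  constructor
  · intro γ
    have hle : (⨆ (γ') (_ : γ' ≠ γ), Finsupp.supported k k {b : α | σ b = γ'})
        ≤ Finsupp.supported k k {b : α | σ b ≠ γ} := by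
      refine iSup_le fun γ' => iSup_le fun hγ' => Finsupp.supported_mono ?_
      intro b hb
      simp only [Set.mem_setOf_eq] at hb ⊢
      rw [hb]; exact hγ'
    exact (Finsupp.disjoint_supported_supported
      (by simp [Set.disjoint_left])).mono_right hle
  · rw [eq_top_iff]
    intro x _
    rw [← Finsupp.sum_single x]
    refine Submodule.finsuppSum_mem _ _ _ _ fun b hb => ?_
    exact Submodule.mem_iSup_of_mem (σ b)
      (Finsupp.single_mem_supported k _ rfl)

variable (n k) in
/-- The graded pieces of the hom spaces of the graded category `A_{(p,q)}`. -/
def grA (p q : ZMod n → ℤ) (i j : ZMod n) (δ : ℤ) : Submodule k (AHom n k i j) :=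
  Finsupp.supported k k {b : {c : ℤ // tau n i c = j} | deg p q i b.1 = δ}

lemma grA_internal (p q : ZMod n → ℤ) (i j : ZMod n) :
    DirectSum.IsInternal (grA n k p q i j) :=
  isInternal_supported (α := {c : ℤ // tau n i c = j}) (Γ := ℤ)
    (fun b => deg p q i b.1)

lemma Aid_mem_grA (p q : ZMod n → ℤ) (i : ZMod n) :
    Aid n k i ∈ grA n k p q i i 0 := by
  apply Finsupp.single_mem_supported
  show deg p q i 0 = 0
  norm_num [deg]

lemma Acomp_mem_grA (p q : ZMod n → ℤ) {i j l : ZMod n} (δ₁ δ₂ : ℤ)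
    (g : AHom n k j l) (f : AHom n k i j)
    (hg : g ∈ grA n k p q j l δ₂) (hf : f ∈ grA n k p q i j δ₁) :
    Acomp n k g f ∈ grA n k p q i l (δ₁ + δ₂) := by
  unfold Acomp
  refine Submodule.finsuppSum_mem _ _ _ _ fun m₁ hm₁ => ?_
  refine Submodule.finsuppSum_mem _ _ _ _ fun m₂ hm₂ => ?_
  refine Submodule.smul_mem _ _ ?_
  have hd₁ : deg p q i m₁.1 = δ₁ :=
    (Finsupp.mem_supported k f).mp hf (Finsupp.mem_support_iff.mpr hm₁)
  have hd₂ : deg p q j m₂.1 = δ₂ :=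
    (Finsupp.mem_supported k g).mp hg (Finsupp.mem_support_iff.mpr hm₂)
  rcases hbm : cmul m₂.1 m₁.1 with _ | r
  · rw [bm, hbm, obm_none]; exact zero_mem _
  · rw [bm, hbm, obm_some]
    split_ifs with ht
    · apply Finsupp.single_mem_supported
      show deg p q i r = δ₁ + δ₂
      rw [deg_cmul p q i hbm, m₁.2, hd₁, hd₂]
    · exact zero_mem _

variable (n k) in
/-- The generator `u_{i,i+1} : X_i → X_{i+1}` (the word consisting of one letter `u`,
with code `-1`). -/
def uElem (i : ZMod n) : AHom n k i (i + 1) :=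
  Finsupp.single ⟨-1, by norm_num [tau]⟩ 1

variable (n k) in
/-- The generator `v_{i,i-1} : X_i → X_{i-1}` (the word consisting of one letter `v`,
with code `1`). -/
def vElem (i : ZMod n) : AHom n k i (i - 1) :=
  Finsupp.single ⟨1, by norm_num [tau]⟩ 1

end ACat

end ACat

noncomputable section Stmt12

open ACat MvPolynomial

attribute [local instance] Classical.propDecidable

/-- The polynomial ring `R = ℂ[z₁,z₂,z₃]` (variables indexed by `ZMod 3`). -/
abbrev R3 : Type := MvPolynomial (ZMod 3) ℂ

/-- The superpotential `W = z₁z₂z₃`. -/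
def W3 : R3 := X 0 * X 1 * X 2

variable (D : ℕ) (d : ZMod 3 → ℤ)

/-- The weights of the `(1/D)ℤ`-grading of `R`: `deg zᵢ = 2dᵢ/D`. -/
def wt : ZMod 3 → ℚ := fun i => 2 * (d i : ℚ) / (D : ℚ)

/-- The graded pieces of `R`. -/
def Rgr (γ : ℚ) : Submodule ℂ R3 :=
  weightedHomogeneousSubmodule ℂ (wt D d) γ

/-- A `(1/D)ℤ`-graded matrix factorization of `W = z₁z₂z₃`: a pair of finitely
generated free `(1/D)ℤ`-graded `R`-modules (encoded by their ranks and the degree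
shifts `σ` of their basis vectors) together with homogeneous maps `t₁`, `t₀` of
degree `1` whose composites (both ways) are multiplication by `W`. -/
structure MFQ where
  N₁ : ℕ
  N₀ : ℕ
  σ₁ : Fin N₁ → ℚ
  σ₀ : Fin N₀ → ℚ
  t₁ : (Fin N₁ → R3) →ₗ[R3] (Fin N₀ → R3)
  t₀ : (Fin N₀ → R3) →ₗ[R3] (Fin N₁ → R3)
  t₁_mem : ∀ (γ : ℚ) (v : Fin N₁ → R3), (∀ b, v b ∈ Rgr D d (γ - σ₁ b)) →
    ∀ b, t₁ v b ∈ Rgr D d (γ + 1 - σ₀ b)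
  t₀_mem : ∀ (γ : ℚ) (v : Fin N₀ → R3), (∀ b, v b ∈ Rgr D d (γ - σ₀ b)) →
    ∀ b, t₀ v b ∈ Rgr D d (γ + 1 - σ₁ b)
  factor₁ : ∀ v, t₁ (t₀ v) = W3 • v
  factor₀ : ∀ v, t₀ (t₁ v) = W3 • v

/-- Multiplication by a ring element, as an endomorphism of a free module. -/
def mulMap {n m : ℕ} (h : n = m) (a : R3) : (Fin n → R3) →ₗ[R3] (Fin m → R3) :=
  a • (LinearMap.funLeft R3 R3 (Fin.cast h.symm))

lemma dtriple (hsum : d 0 + d 1 + d 2 = (D : ℤ)) :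
    ∀ i : ZMod 3, d i + d (i + 1) + d (i + 2) = (D : ℤ) := by
  intro i
  fin_cases i
  · show d 0 + d (0 + 1) + d (0 + 2) = (D : ℤ)
    have e1 : (0 + 1 : ZMod 3) = 1 := by decide
    have e2 : (0 + 2 : ZMod 3) = 2 := by decide
    rw [e1, e2]; exact hsum
  · show d 1 + d (1 + 1) + d (1 + 2) = (D : ℤ)
    have e1 : (1 + 1 : ZMod 3) = 2 := by decide
    have e2 : (1 + 2 : ZMod 3) = 0 := by decide
    rw [e1, e2]; linarith [hsum]
  · show d 2 + d (2 + 1) + d (2 + 2) = (D : ℤ)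
    have e1 : (2 + 1 : ZMod 3) = 0 := by decide
    have e2 : (2 + 2 : ZMod 3) = 1 := by decide
    rw [e1, e2]; linarith [hsum]

/-- The matrix factorization
`T_i = (R --(z_{i+1} z_{i+2})--> R[1 - 2d̃ᵢ] --(z_i)--> R)` of `W`. -/
def TT (hD : 1 ≤ D) (hsum : d 0 + d 1 + d 2 = (D : ℤ)) (i : ZMod 3) : MFQ D d where
  N₁ := 1
  N₀ := 1
  σ₁ := fun _ => 0
  σ₀ := fun _ => 2 * (d i : ℚ) / (D : ℚ) - 1
  t₁ := mulMap rfl (X (i + 1) * X (i + 2))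
  t₀ := mulMap rfl (X i)
  t₁_mem := by
    intro γ v hv b
    have h1 : IsWeightedHomogeneous (wt D d) (X (i+1) * X (i+2) : R3)
        (wt D d (i+1) + wt D d (i+2)) :=
      (isWeightedHomogeneous_X ℂ _ (i+1)).mul (isWeightedHomogeneous_X ℂ _ (i+2))
    have h2 : IsWeightedHomogeneous (wt D d) (v b) (γ - 0) :=
      (mem_weightedHomogeneousSubmodule _ _ _ _).mp (hv b)
    have h3 := h1.mul h2
    have heq : wt D d (i+1) + wt D d (i+2) + (γ - 0)
        = γ + 1 - (2 * (d i : ℚ) / (D : ℚ) - 1) := by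
      have hs := dtriple D d hsum i
      have hz : d (i + 1) + d (i + 2) = (D : ℤ) - d i := by linarith [hs]
      have hq : ((d (i + 1) : ℚ)) + ((d (i + 2) : ℚ)) = (D : ℚ) - (d i : ℚ) := by
        exact_mod_cast hz
      have hD' : (D : ℚ) ≠ 0 := by
        simp only [ne_eq, Nat.cast_eq_zero]; omega
      unfold wt
      field_simp
      linear_combination (2 : ℚ) * hq
    rw [Rgr, mem_weightedHomogeneousSubmodule, ← heq]
    show IsWeightedHomogeneous (wt D d) ((X (i+1) * X (i+2) : R3) • v b) _
    simpa [smul_eq_mul] using h3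
  t₀_mem := by
    intro γ v hv b
    have h1 : IsWeightedHomogeneous (wt D d) (X i : R3) (wt D d i) :=
      isWeightedHomogeneous_X ℂ _ i
    have h2 : IsWeightedHomogeneous (wt D d) (v b)
        (γ - (2 * (d i : ℚ) / (D : ℚ) - 1)) :=
      (mem_weightedHomogeneousSubmodule _ _ _ _).mp (hv b)
    have h3 := h1.mul h2
    have heq : wt D d i + (γ - (2 * (d i : ℚ) / (D : ℚ) - 1)) = γ + 1 - 0 := by
      unfold wt; ring
    rw [Rgr, mem_weightedHomogeneousSubmodule, ← heq]
    show IsWeightedHomogeneous (wt D d) ((X i : R3) • v b) _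
    simpa [smul_eq_mul] using h3
  factor₁ := by
    intro v
    funext b
    show (X (i+1) * X (i+2) : R3) • ((X i : R3) • v _) = W3 • v b
    have hw : (X (i+1) * X (i+2) : R3) * X i = W3 := by
      fin_cases i
      · show (X (0+1) * X (0+2) : R3) * X 0 = W3
        have e1 : (0 + 1 : ZMod 3) = 1 := by decide
        have e2 : (0 + 2 : ZMod 3) = 2 := by decide
        rw [e1, e2, W3]; try ring
      · show (X (1+1) * X (1+2) : R3) * X 1 = W3
        have e1 : (1 + 1 : ZMod 3) = 2 := by decide
        have e2 : (1 + 2 : ZMod 3) = 0 := by decide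
        rw [e1, e2, W3]; try ring
      · show (X (2+1) * X (2+2) : R3) * X 2 = W3
        have e1 : (2 + 1 : ZMod 3) = 0 := by decide
        have e2 : (2 + 2 : ZMod 3) = 1 := by decide
        rw [e1, e2, W3]; try ring
    rw [smul_smul, hw]
    rfl
  factor₀ := by
    intro v
    funext b
    show (X i : R3) • ((X (i+1) * X (i+2) : R3) • v _) = W3 • v b
    have hw : (X i : R3) * (X (i+1) * X (i+2)) = W3 := by
      fin_cases i
      · show (X 0 : R3) * (X (0+1) * X (0+2)) = W3
        have e1 : (0 + 1 : ZMod 3) = 1 := by decide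
        have e2 : (0 + 2 : ZMod 3) = 2 := by decide
        rw [e1, e2, W3]; try ring
      · show (X 1 : R3) * (X (1+1) * X (1+2)) = W3
        have e1 : (1 + 1 : ZMod 3) = 2 := by decide
        have e2 : (1 + 2 : ZMod 3) = 0 := by decide
        rw [e1, e2, W3]; try ring
      · show (X 2 : R3) * (X (2+1) * X (2+2)) = W3
        have e1 : (2 + 1 : ZMod 3) = 0 := by decide
        have e2 : (2 + 2 : ZMod 3) = 1 := by decide
        rw [e1, e2, W3]; try ring
    rw [smul_smul, hw]
    rfl

variable {D d}

/-- The even part of the morphism space of matrix factorizations. -/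
abbrev EMaps (T S : MFQ D d) : Type :=
  ((Fin T.N₁ → R3) →ₗ[R3] (Fin S.N₁ → R3)) × ((Fin T.N₀ → R3) →ₗ[R3] (Fin S.N₀ → R3))

/-- The odd part of the morphism space of matrix factorizations. -/
abbrev OMaps (T S : MFQ D d) : Type :=
  ((Fin T.N₁ → R3) →ₗ[R3] (Fin S.N₀ → R3)) × ((Fin T.N₀ → R3) →ₗ[R3] (Fin S.N₁ → R3))

/-- The full morphism space (even part, odd part). -/
abbrev MMaps (T S : MFQ D d) : Type := EMaps T S × OMaps T S

/-- The differential on even morphisms (`d f = s ∘ f - f ∘ t`). -/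
def dE {T S : MFQ D d} (f : EMaps T S) : OMaps T S :=
  (S.t₁ ∘ₗ f.1 - f.2 ∘ₗ T.t₁, S.t₀ ∘ₗ f.2 - f.1 ∘ₗ T.t₀)

/-- The differential on odd morphisms (`d g = s ∘ g + g ∘ t`). -/
def dO {T S : MFQ D d} (g : OMaps T S) : EMaps T S :=
  (S.t₀ ∘ₗ g.1 + g.2 ∘ₗ T.t₁, S.t₁ ∘ₗ g.2 + g.1 ∘ₗ T.t₀)

/-- Closedness of a morphism (even and odd parts separately). -/
def IsCycle {T S : MFQ D d} (m : MMaps T S) : Prop := dE m.1 = 0 ∧ dO m.2 = 0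

/-- Exactness of a morphism: it is a boundary in the 2-periodic Hom complex. -/
def IsCob {T S : MFQ D d} (m : MMaps T S) : Prop :=
  (∃ g : OMaps T S, dO g = m.1) ∧ (∃ f : EMaps T S, dE f = m.2)

/-- Composition in the (cohomology of the) DG category of matrix factorizations. -/
def mcomp {P S U : MFQ D d} (f : MMaps S U) (g : MMaps P S) : MMaps P U :=
  ((f.1.1 ∘ₗ g.1.1 + f.2.2 ∘ₗ g.2.1, f.1.2 ∘ₗ g.1.2 + f.2.1 ∘ₗ g.2.2),
   (f.1.2 ∘ₗ g.2.1 + f.2.1 ∘ₗ g.1.1, f.1.1 ∘ₗ g.2.2 + f.2.2 ∘ₗ g.1.2))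

/-- The identity morphism (an even cycle). -/
def idMS (T : MFQ D d) : MMaps T T := ((LinearMap.id, LinearMap.id), 0)

/-- Homogeneity of degree `γ` for a map between graded free modules with shift
vectors `σ`, `τ`. -/
def IsHomogMap {n m : ℕ} (σ : Fin n → ℚ) (τ : Fin m → ℚ) (γ : ℚ)
    (f : (Fin n → R3) →ₗ[R3] (Fin m → R3)) : Prop :=
  ∀ (γ' : ℚ) (v : Fin n → R3), (∀ b, v b ∈ Rgr D d (γ' - σ b)) →
    ∀ b, f v b ∈ Rgr D d (γ' + γ - τ b)

variable (D d)

/-- The odd closed morphism `ũ_{i,i+1} : T_i → T_{i+1}`, with components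
multiplication by `z_{i+2}` and by `-1`. -/
def uMF (hD : 1 ≤ D) (hsum : d 0 + d 1 + d 2 = (D : ℤ)) (i : ZMod 3) :
    OMaps (TT D d hD hsum i) (TT D d hD hsum (i + 1)) :=
  (mulMap rfl (X (i + 2)), mulMap rfl (-1))

/-- The odd closed morphism `ṽ_{i,i-1} : T_i → T_{i-1}`, with components
multiplication by `z_{i+1}` and by `-1`. -/
def vMF (hD : 1 ≤ D) (hsum : d 0 + d 1 + d 2 = (D : ℤ)) (i : ZMod 3) :
    OMaps (TT D d hD hsum i) (TT D d hD hsum (i - 1)) :=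
  (mulMap rfl (X (i + 1)), mulMap rfl (-1))

/-- The parity of a basis word of `A`. -/
def par (m : ℤ) : ZMod 2 := ((m : ℤ) : ZMod 2)

/-- The joint (`(1/D)ℤ`-degree, parity) grading of the hom spaces of `A_{(p̃,q̃)}`. -/
def grQ (p q : ZMod 3 → ℤ) (i j : ZMod 3) (γ : ℚ × ZMod 2) :
    Submodule ℂ (AHom 3 ℂ i j) :=
  Finsupp.supported ℂ ℂ
    {b : {c : ℤ // tau 3 i c = j} | ((deg p q i b.1 : ℚ) / (D : ℚ), par b.1) = γ}


/-! ### Auxiliary infrastructure for the proof -/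

section Aux


example : ∀ i : ZMod 3, i - 1 = i + 2 ∧ i + 3 = i ∧ i + 1 ≠ i ∧ i + 2 ≠ i ∧ i + 1 ≠ i + 2 := by decide

abbrev E1 : Type := (Fin 1 → R3) →ₗ[R3] (Fin 1 → R3)

/-- Multiplication map as an `E1`. -/
def mM (a : R3) : E1 := mulMap rfl a

lemma mM_apply (a : R3) (v : Fin 1 → R3) (b : Fin 1) : mM a v b = a * v b := rfl

lemma mM_comp (a b : R3) : mM a ∘ₗ mM b = mM (a * b) :=
  LinearMap.ext fun v => funext fun c => by simp [mM_apply, mul_assoc]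

lemma mM_add (a b : R3) : mM (a + b) = mM a + mM b :=
  LinearMap.ext fun v => funext fun c => by simp [mM_apply, add_mul]

lemma mM_sub (a b : R3) : mM (a - b) = mM a - mM b :=
  LinearMap.ext fun v => funext fun c => by simp [mM_apply, sub_mul]

lemma mM_zero : mM 0 = 0 := LinearMap.ext fun v => funext fun c => by simp [mM_apply]

lemma mM_one : mM 1 = LinearMap.id := LinearMap.ext fun v => funext fun c => by simp [mM_apply]

lemma mM_smul (r a : R3) : mM (r * a) = r • mM a :=
  LinearMap.ext fun v => funext fun c => by simp [mM_apply, mul_assoc]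

lemma mM_inj {a b : R3} (h : mM a = mM b) : a = b := by
  have := congrArg (fun L : E1 => L (fun _ => 1) 0) h
  simpa [mM_apply] using this

lemma exists_mM (F : E1) : F = mM (F (fun _ => 1) 0) := by
  refine LinearMap.ext fun v => funext fun c => ?_
  have hv : v = (v 0) • (fun _ => (1 : R3)) := by
    funext b
    have : b = 0 := Subsingleton.elim _ _
    simp [this]
  have hc : c = 0 := Subsingleton.elim _ _
  rw [mM_apply, hc]
  conv_lhs => rw [hv]
  rw [map_smul]
  simp [mul_comm]

end Aux
section Aux2

variable (D : ℕ) (d : ZMod 3 → ℤ) (hD : 1 ≤ D) (hsum : d 0 + d 1 + d 2 = (D : ℤ))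

/-- Build a morphism of matrix factorizations from four polynomials. -/
def mk4 (i j : ZMod 3) (e₁ e₀ o₁ o₀ : R3) :
    MMaps (TT D d hD hsum i) (TT D d hD hsum j) :=
  ((mM e₁, mM e₀), (mM o₁, mM o₀))

variable {D d}

lemma mk4_add (i j : ZMod 3) (e₁ e₀ o₁ o₀ e₁' e₀' o₁' o₀' : R3) :
    mk4 D d hD hsum i j (e₁ + e₁') (e₀ + e₀') (o₁ + o₁') (o₀ + o₀')
      = mk4 D d hD hsum i j e₁ e₀ o₁ o₀ + mk4 D d hD hsum i j e₁' e₀' o₁' o₀' := by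
  simp only [mk4, mM_add]; rfl

lemma mk4_sub (i j : ZMod 3) (e₁ e₀ o₁ o₀ e₁' e₀' o₁' o₀' : R3) :
    mk4 D d hD hsum i j (e₁ - e₁') (e₀ - e₀') (o₁ - o₁') (o₀ - o₀')
      = mk4 D d hD hsum i j e₁ e₀ o₁ o₀ - mk4 D d hD hsum i j e₁' e₀' o₁' o₀' := by
  simp only [mk4, mM_sub]; rfl

lemma mk4_zero (i j : ZMod 3) : mk4 D d hD hsum i j 0 0 0 0 = 0 := by
  simp only [mk4, mM_zero]; rfl

lemma mk4_smul (i j : ZMod 3) (r : R3) (e₁ e₀ o₁ o₀ : R3) :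
    mk4 D d hD hsum i j (r * e₁) (r * e₀) (r * o₁) (r * o₀)
      = r • mk4 D d hD hsum i j e₁ e₀ o₁ o₀ := by
  simp only [mk4, mM_smul]; rfl

lemma dE_mk4 (i j : ZMod 3) (e₁ e₀ : R3) :
    dE (T := TT D d hD hsum i) (S := TT D d hD hsum j) (mM e₁, mM e₀)
      = (mM (X (j+1) * X (j+2) * e₁ - e₀ * (X (i+1) * X (i+2))),
         mM (X j * e₀ - e₁ * X i)) := by
  show (mM (X (j+1) * X (j+2)) ∘ₗ mM e₁ - mM e₀ ∘ₗ mM (X (i+1) * X (i+2)),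
        mM (X j) ∘ₗ mM e₀ - mM e₁ ∘ₗ mM (X i)) = _
  rw [mM_comp, mM_comp, mM_comp, mM_comp, ← mM_sub, ← mM_sub]

lemma dO_mk4 (i j : ZMod 3) (o₁ o₀ : R3) :
    dO (T := TT D d hD hsum i) (S := TT D d hD hsum j) (mM o₁, mM o₀)
      = (mM (X j * o₁ + o₀ * (X (i+1) * X (i+2))),
         mM (X (j+1) * X (j+2) * o₀ + o₁ * X i)) := by
  show (mM (X j) ∘ₗ mM o₁ + mM o₀ ∘ₗ mM (X (i+1) * X (i+2)),
        mM (X (j+1) * X (j+2)) ∘ₗ mM o₀ + mM o₁ ∘ₗ mM (X i)) = _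
  rw [mM_comp, mM_comp, mM_comp, mM_comp, ← mM_add, ← mM_add]

lemma mcomp_mk4 (i j l : ZMod 3) (e₁ e₀ o₁ o₀ e₁' e₀' o₁' o₀' : R3) :
    mcomp (mk4 D d hD hsum j l e₁ e₀ o₁ o₀) (mk4 D d hD hsum i j e₁' e₀' o₁' o₀')
      = mk4 D d hD hsum i l (e₁ * e₁' + o₀ * o₁') (e₀ * e₀' + o₁ * o₀')
          (e₀ * o₁' + o₁ * e₁') (e₁ * o₀' + o₀ * e₀') := by
  show (((mM e₁) ∘ₗ (mM e₁') + (mM o₀) ∘ₗ (mM o₁'),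
         (mM e₀) ∘ₗ (mM e₀') + (mM o₁) ∘ₗ (mM o₀')),
        ((mM e₀) ∘ₗ (mM o₁') + (mM o₁) ∘ₗ (mM e₁'),
         (mM e₁) ∘ₗ (mM o₀') + (mM o₀) ∘ₗ (mM e₀'))) = _
  simp only [mM_comp, mM_add, mk4]
  rfl

lemma isCob_mk4 (i j : ZMod 3) {e₁ e₀ o₁ o₀ : R3} (g₁ g₀ f₁ f₀ : R3)
    (h1 : e₁ = X j * g₁ + g₀ * (X (i+1) * X (i+2)))
    (h2 : e₀ = X (j+1) * X (j+2) * g₀ + g₁ * X i)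
    (h3 : o₁ = X (j+1) * X (j+2) * f₁ - f₀ * (X (i+1) * X (i+2)))
    (h4 : o₀ = X j * f₀ - f₁ * X i) :
    IsCob (mk4 D d hD hsum i j e₁ e₀ o₁ o₀) := by
  constructor
  · exact ⟨(mM g₁, mM g₀), by rw [dO_mk4, ← h1, ← h2]; rfl⟩
  · exact ⟨(mM f₁, mM f₀), by rw [dE_mk4, ← h3, ← h4]; rfl⟩

lemma isCob_mk4_elim (i j : ZMod 3) {e₁ e₀ o₁ o₀ : R3}
    (h : IsCob (mk4 D d hD hsum i j e₁ e₀ o₁ o₀)) :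
    (∃ g₁ g₀ : R3, e₁ = X j * g₁ + g₀ * (X (i+1) * X (i+2)) ∧
        e₀ = X (j+1) * X (j+2) * g₀ + g₁ * X i) ∧
    (∃ f₁ f₀ : R3, o₁ = X (j+1) * X (j+2) * f₁ - f₀ * (X (i+1) * X (i+2)) ∧
        o₀ = X j * f₀ - f₁ * X i) := by
  obtain ⟨⟨g, hg⟩, ⟨f, hf⟩⟩ := h
  set a : R3 := (show E1 from g.1) (fun _ => 1) 0 with ha
  set b : R3 := (show E1 from g.2) (fun _ => 1) 0 with hb
  set a' : R3 := (show E1 from f.1) (fun _ => 1) 0 with ha'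
  set b' : R3 := (show E1 from f.2) (fun _ => 1) 0 with hb'
  have hgeq : g = ((mM a, mM b) : OMaps (TT D d hD hsum i) (TT D d hD hsum j)) := by
    have h1 : (show E1 from g.1) = mM a := ha ▸ exists_mM _
    have h2 : (show E1 from g.2) = mM b := hb ▸ exists_mM _
    exact Prod.ext h1 h2
  have hfeq : f = ((mM a', mM b') : EMaps (TT D d hD hsum i) (TT D d hD hsum j)) := by
    have h1 : (show E1 from f.1) = mM a' := ha' ▸ exists_mM _
    have h2 : (show E1 from f.2) = mM b' := hb' ▸ exists_mM _
    exact Prod.ext h1 h2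
  rw [hgeq] at hg
  rw [hfeq] at hf
  rw [dO_mk4 hD hsum i j a b] at hg
  rw [dE_mk4 hD hsum i j a' b'] at hf
  have hg1 : mM (X j * a + b * (X (i+1) * X (i+2))) = mM e₁ := congrArg Prod.fst hg
  have hg2 : mM (X (j+1) * X (j+2) * b + a * X i) = mM e₀ := congrArg Prod.snd hg
  have hf1 : mM (X (j+1) * X (j+2) * a' - b' * (X (i+1) * X (i+2))) = mM o₁ :=
    congrArg Prod.fst hf
  have hf2 : mM (X j * b' - a' * X i) = mM o₀ := congrArg Prod.snd hf
  exact ⟨⟨a, b, (mM_inj hg1).symm, (mM_inj hg2).symm⟩,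
    ⟨a', b', (mM_inj hf1).symm, (mM_inj hf2).symm⟩⟩

lemma isCycle_mk4 (i j : ZMod 3) {e₁ e₀ o₁ o₀ : R3}
    (h1 : X (j+1) * X (j+2) * e₁ - e₀ * (X (i+1) * X (i+2)) = 0)
    (h2 : X j * e₀ - e₁ * X i = 0)
    (h3 : X j * o₁ + o₀ * (X (i+1) * X (i+2)) = 0)
    (h4 : X (j+1) * X (j+2) * o₀ + o₁ * X i = 0) :
    IsCycle (mk4 D d hD hsum i j e₁ e₀ o₁ o₀) := by
  constructor
  · show dE (T := TT D d hD hsum i) (S := TT D d hD hsum j) (mM e₁, mM e₀) = 0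
    rw [dE_mk4, h1, h2, mM_zero]; rfl
  · show dO (T := TT D d hD hsum i) (S := TT D d hD hsum j) (mM o₁, mM o₀) = 0
    rw [dO_mk4, h3, h4, mM_zero]; rfl

lemma isCycle_mk4_elim (i j : ZMod 3) {e₁ e₀ o₁ o₀ : R3}
    (h : IsCycle (mk4 D d hD hsum i j e₁ e₀ o₁ o₀)) :
    X (j+1) * X (j+2) * e₁ - e₀ * (X (i+1) * X (i+2)) = 0 ∧
    X j * e₀ - e₁ * X i = 0 ∧
    X j * o₁ + o₀ * (X (i+1) * X (i+2)) = 0 ∧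
    X (j+1) * X (j+2) * o₀ + o₁ * X i = 0 := by
  obtain ⟨hE, hO⟩ := h
  have hE' : dE (T := TT D d hD hsum i) (S := TT D d hD hsum j) (mM e₁, mM e₀) = 0 := hE
  have hO' : dO (T := TT D d hD hsum i) (S := TT D d hD hsum j) (mM o₁, mM o₀) = 0 := hO
  rw [dE_mk4] at hE'
  rw [dO_mk4] at hO'
  refine ⟨?_, ?_, ?_, ?_⟩
  · exact mM_inj (by rw [mM_zero]; exact congrArg Prod.fst hE')
  · exact mM_inj (by rw [mM_zero]; exact congrArg Prod.snd hE')
  · exact mM_inj (by rw [mM_zero]; exact congrArg Prod.fst hO')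
  · exact mM_inj (by rw [mM_zero]; exact congrArg Prod.snd hO')

lemma isCob_zero (i j : ZMod 3) : IsCob (0 : MMaps (TT D d hD hsum i) (TT D d hD hsum j)) := by
  rw [← mk4_zero (hD := hD) (hsum := hsum) i j]
  exact isCob_mk4 hD hsum i j 0 0 0 0 (by ring) (by ring) (by ring) (by ring)

/-- Any morphism equals a `mk4`. -/
lemma eq_mk4 (i j : ZMod 3) (z : MMaps (TT D d hD hsum i) (TT D d hD hsum j)) :
    ∃ e₁ e₀ o₁ o₀ : R3, z = mk4 D d hD hsum i j e₁ e₀ o₁ o₀ := by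
  refine ⟨(show E1 from z.1.1) (fun _ => 1) 0, (show E1 from z.1.2) (fun _ => 1) 0,
    (show E1 from z.2.1) (fun _ => 1) 0, (show E1 from z.2.2) (fun _ => 1) 0, ?_⟩
  have h11 : (show E1 from z.1.1) = mM ((show E1 from z.1.1) (fun _ => 1) 0) := exists_mM _
  have h12 : (show E1 from z.1.2) = mM ((show E1 from z.1.2) (fun _ => 1) 0) := exists_mM _
  have h21 : (show E1 from z.2.1) = mM ((show E1 from z.2.1) (fun _ => 1) 0) := exists_mM _
  have h22 : (show E1 from z.2.2) = mM ((show E1 from z.2.2) (fun _ => 1) 0) := exists_mM _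
  exact Prod.ext (Prod.ext h11 h12) (Prod.ext h21 h22)

end Aux2
section Aux3

variable (D : ℕ) (d : ZMod 3 → ℤ) (hD : 1 ≤ D) (hsum : d 0 + d 1 + d 2 = (D : ℤ))

/-- The quadruple of polynomials attached to a basis word of `A`. -/
def w4 (i : ZMod 3) (m : ℤ) : R3 × R3 × R3 × R3 :=
  if m % 2 = 0 then
    ((-X (if 0 < m then i + 1 else i + 2))^(m.natAbs / 2),
     (-X (if 0 < m then i + 1 else i + 2))^(m.natAbs / 2), 0, 0)
  else
    (0, 0, X (if 0 < m then i + 1 else i + 2) * (-X (if 0 < m then i + 1 else i + 2))^(m.natAbs / 2),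
     -(-X (if 0 < m then i + 1 else i + 2))^(m.natAbs / 2))

/-- The linear extension of `w4` over a hom space of `A`. -/
def PhiP {j : ZMod 3} (i : ZMod 3) (x : AHom 3 ℂ i j) : R3 × R3 × R3 × R3 :=
  x.sum fun b c => (algebraMap ℂ R3 c) • w4 i b.1

variable {D d}

lemma PhiP_add {i j : ZMod 3} (x y : AHom 3 ℂ i j) :
    PhiP i (x + y) = PhiP i x + PhiP i y :=
  Finsupp.sum_add_index' (fun b => by simp) (fun b c c' => by rw [map_add, add_smul])

lemma PhiP_smul {i j : ZMod 3} (c : ℂ) (x : AHom 3 ℂ i j) :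
    PhiP i (c • x) = (algebraMap ℂ R3 c) • PhiP i x := by
  unfold PhiP
  rw [Finsupp.sum_smul_index' (fun b => by simp), Finsupp.smul_sum]
  refine Finsupp.sum_congr fun b hb => ?_
  rw [smul_eq_mul, map_mul, mul_smul]

lemma PhiP_zero {i j : ZMod 3} : PhiP i (0 : AHom 3 ℂ i j) = 0 := by simp [PhiP]

lemma PhiP_single {i j : ZMod 3} (b : {c : ℤ // tau 3 i c = j}) (c : ℂ) :
    PhiP i (Finsupp.single b c) = (algebraMap ℂ R3 c) • w4 i b.1 :=
  Finsupp.sum_single_index (by simp)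

variable (D d) in
/-- The functor `Φ` on morphisms. -/
def Phi (i j : ZMod 3) (x : AHom 3 ℂ i j) : MMaps (TT D d hD hsum i) (TT D d hD hsum j) :=
  mk4 D d hD hsum i j (PhiP i x).1 (PhiP i x).2.1 (PhiP i x).2.2.1 (PhiP i x).2.2.2

lemma Phi_add (i j : ZMod 3) (x y : AHom 3 ℂ i j) :
    Phi D d hD hsum i j (x + y) = Phi D d hD hsum i j x + Phi D d hD hsum i j y := by
  unfold Phi
  rw [PhiP_add, ← mk4_add]
  rfl

lemma Phi_smul (i j : ZMod 3) (c : ℂ) (x : AHom 3 ℂ i j) :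
    Phi D d hD hsum i j (c • x) = (algebraMap ℂ R3 c) • Phi D d hD hsum i j x := by
  unfold Phi
  rw [PhiP_smul, ← mk4_smul]
  rfl

lemma Phi_zero (i j : ZMod 3) : Phi D d hD hsum i j 0 = 0 := by
  unfold Phi
  rw [PhiP_zero, ← mk4_zero (hD := hD) (hsum := hsum) i j]
  rfl

lemma Phi_single (i j : ZMod 3) (b : {c : ℤ // tau 3 i c = j}) (c : ℂ) :
    Phi D d hD hsum i j (Finsupp.single b c)
      = (algebraMap ℂ R3 c) • mk4 D d hD hsum i j (w4 i b.1).1 (w4 i b.1).2.1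
          (w4 i b.1).2.2.1 (w4 i b.1).2.2.2 := by
  unfold Phi
  rw [PhiP_single, ← mk4_smul]
  rfl

/-! Helper facts about `ZMod 3` and `tau`. -/

lemma z3 : ∀ i : ZMod 3, i - 1 = i + 2 ∧ i + 3 = i ∧ i + 1 + 1 = i + 2 ∧ i + 2 + 1 = i
    ∧ i + 1 + 2 = i ∧ i + 2 + 2 = i + 1 ∧ i + 1 ≠ i ∧ i + 2 ≠ i ∧ i + 1 ≠ i + 2 := by decide

lemma z3_sub : ∀ i : ZMod 3, i - 1 = i + 2 := fun i => (z3 i).1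
lemma z3_11 : ∀ i : ZMod 3, i + 1 + 1 = i + 2 := fun i => (z3 i).2.2.1
lemma z3_21 : ∀ i : ZMod 3, i + 2 + 1 = i := fun i => (z3 i).2.2.2.1
lemma z3_12 : ∀ i : ZMod 3, i + 1 + 2 = i := fun i => (z3 i).2.2.2.2.1
lemma z3_22 : ∀ i : ZMod 3, i + 2 + 2 = i + 1 := fun i => (z3 i).2.2.2.2.2.1
lemma z3_ne1 : ∀ i : ZMod 3, i + 1 ≠ i := fun i => (z3 i).2.2.2.2.2.2.1
lemma z3_ne2 : ∀ i : ZMod 3, i + 2 ≠ i := fun i => (z3 i).2.2.2.2.2.2.2.1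
lemma z3_ne12 : ∀ i : ZMod 3, i + 1 ≠ i + 2 := fun i => (z3 i).2.2.2.2.2.2.2.2

lemma tau_even {i : ZMod 3} {m : ℤ} (h : m % 2 = 0) : tau 3 i m = i := by
  simp [tau, h]

lemma tau_odd_pos {i : ZMod 3} {m : ℤ} (h : m % 2 ≠ 0) (h2 : 0 < m) : tau 3 i m = i + 2 := by
  rw [tau, if_neg h, if_pos h2, (z3 i).1]

lemma tau_odd_neg {i : ZMod 3} {m : ℤ} (h : m % 2 ≠ 0) (h2 : ¬ 0 < m) : tau 3 i m = i + 1 := by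
  rw [tau, if_neg h, if_neg h2]

/-! Differential algebra lemmas. -/

lemma dE_add {T S : MFQ D d} (f g : EMaps T S) : dE (f + g) = dE f + dE g := by
  refine Prod.ext ?_ ?_ <;>
    simp only [dE, Prod.fst_add, Prod.snd_add, LinearMap.add_comp, LinearMap.comp_add] <;>
    abel

lemma dO_add {T S : MFQ D d} (f g : OMaps T S) : dO (f + g) = dO f + dO g := by
  refine Prod.ext ?_ ?_ <;>
    simp only [dO, Prod.fst_add, Prod.snd_add, LinearMap.add_comp, LinearMap.comp_add] <;>
    abel

lemma dE_zero {T S : MFQ D d} : dE (0 : EMaps T S) = 0 := by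
  simp [dE, Prod.ext_iff]

lemma dO_zero {T S : MFQ D d} : dO (0 : OMaps T S) = 0 := by
  simp [dO, Prod.ext_iff]

lemma dE_smul {T S : MFQ D d} (r : R3) (f : EMaps T S) : dE (r • f) = r • dE f := by
  refine Prod.ext ?_ ?_ <;>
    simp only [dE, Prod.smul_fst, Prod.smul_snd, LinearMap.smul_comp, LinearMap.comp_smul,
      smul_sub]

lemma dO_smul {T S : MFQ D d} (r : R3) (f : OMaps T S) : dO (r • f) = r • dO f := by
  refine Prod.ext ?_ ?_ <;>
    simp only [dO, Prod.smul_fst, Prod.smul_snd, LinearMap.smul_comp, LinearMap.comp_smul,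
      smul_add]

lemma IsCycle_add {T S : MFQ D d} {f g : MMaps T S} (hf : IsCycle f) (hg : IsCycle g) :
    IsCycle (f + g) := by
  refine ⟨?_, ?_⟩
  · show dE (f.1 + g.1) = 0
    rw [dE_add, hf.1, hg.1, add_zero]
  · show dO (f.2 + g.2) = 0
    rw [dO_add, hf.2, hg.2, add_zero]

lemma IsCycle_zero {T S : MFQ D d} : IsCycle (0 : MMaps T S) :=
  ⟨dE_zero, dO_zero⟩

lemma IsCycle_smul {T S : MFQ D d} (r : R3) {f : MMaps T S} (hf : IsCycle f) :
    IsCycle (r • f) := by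
  refine ⟨?_, ?_⟩
  · show dE (r • f.1) = 0
    rw [dE_smul, hf.1, smul_zero]
  · show dO (r • f.2) = 0
    rw [dO_smul, hf.2, smul_zero]

lemma IsCob_add {T S : MFQ D d} {f g : MMaps T S} (hf : IsCob f) (hg : IsCob g) :
    IsCob (f + g) := by
  obtain ⟨⟨a, ha⟩, ⟨b, hb⟩⟩ := hf
  obtain ⟨⟨a', ha'⟩, ⟨b', hb'⟩⟩ := hg
  exact ⟨⟨a + a', by rw [dO_add, ha, ha']; rfl⟩, ⟨b + b', by rw [dE_add, hb, hb']; rfl⟩⟩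

lemma IsCob_smul {T S : MFQ D d} (r : R3) {f : MMaps T S} (hf : IsCob f) :
    IsCob (r • f) := by
  obtain ⟨⟨a, ha⟩, ⟨b, hb⟩⟩ := hf
  exact ⟨⟨r • a, by rw [dO_smul, ha]; rfl⟩, ⟨r • b, by rw [dE_smul, hb]; rfl⟩⟩

lemma dE_neg {T S : MFQ D d} (f : EMaps T S) : dE (-f) = - dE f := by
  refine Prod.ext ?_ ?_ <;>
    simp only [dE, Prod.fst_neg, Prod.snd_neg, LinearMap.neg_comp, LinearMap.comp_neg] <;>
    abel

lemma dO_neg {T S : MFQ D d} (f : OMaps T S) : dO (-f) = - dO f := by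
  refine Prod.ext ?_ ?_ <;>
    simp only [dO, Prod.fst_neg, Prod.snd_neg, LinearMap.neg_comp, LinearMap.comp_neg] <;>
    abel

lemma IsCob_neg {T S : MFQ D d} {f : MMaps T S} (hf : IsCob f) : IsCob (-f) := by
  obtain ⟨⟨a, ha⟩, ⟨b, hb⟩⟩ := hf
  exact ⟨⟨-a, by rw [dO_neg, ha]; rfl⟩, ⟨-b, by rw [dE_neg, hb]; rfl⟩⟩

/-- The cycle property of the quadruples `w4`. -/
lemma w4_isCycle (i j : ZMod 3) (m : ℤ) (hm : tau 3 i m = j) :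
    IsCycle (mk4 D d hD hsum i j (w4 i m).1 (w4 i m).2.1 (w4 i m).2.2.1 (w4 i m).2.2.2) := by
  by_cases h : m % 2 = 0
  · have hj : j = i := by rw [← hm, tau_even h]
    rw [hj]
    rw [show w4 i m = ((-X (if 0 < m then i + 1 else i + 2))^(m.natAbs / 2),
      (-X (if 0 < m then i + 1 else i + 2))^(m.natAbs / 2), 0, 0) from by rw [w4, if_pos h]]
    exact isCycle_mk4 hD hsum i i (by ring) (by ring) (by ring) (by ring)
  · rw [show w4 i m = (0, 0,
      X (if 0 < m then i + 1 else i + 2) * (-X (if 0 < m then i + 1 else i + 2))^(m.natAbs / 2),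
      -(-X (if 0 < m then i + 1 else i + 2))^(m.natAbs / 2)) from by rw [w4, if_neg h]]
    by_cases h2 : 0 < m
    · have hj : j = i + 2 := by rw [← hm, tau_odd_pos h h2]
      rw [hj, if_pos h2]
      refine isCycle_mk4 hD hsum i (i + 2) (by ring) (by ring) (by ring) ?_
      rw [z3_21, z3_22]
      ring
    · have hj : j = i + 1 := by rw [← hm, tau_odd_neg h h2]
      rw [hj, if_neg h2]
      refine isCycle_mk4 hD hsum i (i + 1) (by ring) (by ring) (by ring) ?_
      rw [z3_11, z3_12]
      ring

/-- `Φ` sends everything to closed morphisms. -/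
lemma Phi_isCycle (i j : ZMod 3) (x : AHom 3 ℂ i j) : IsCycle (Phi D d hD hsum i j x) := by
  induction x using Finsupp.induction_linear with
  | zero => rw [Phi_zero]; exact IsCycle_zero
  | add f g hf hg => rw [Phi_add]; exact IsCycle_add hf hg
  | single b c =>
      rw [Phi_single]
      exact IsCycle_smul _ (w4_isCycle hD hsum i j b.1 b.2)

end Aux3
section Aux4

variable {D : ℕ} {d : ZMod 3 → ℤ} (hD : 1 ≤ D) (hsum : d 0 + d 1 + d 2 = (D : ℤ))

lemma w4_ep (i : ZMod 3) {m : ℤ} (h : m % 2 = 0) (h2 : 0 < m) :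
    w4 i m = ((-X (i+1))^(m.natAbs/2), (-X (i+1))^(m.natAbs/2), 0, 0) := by
  rw [w4, if_pos h, if_pos h2]

lemma w4_en (i : ZMod 3) {m : ℤ} (h : m % 2 = 0) (h2 : ¬ 0 < m) :
    w4 i m = ((-X (i+2))^(m.natAbs/2), (-X (i+2))^(m.natAbs/2), 0, 0) := by
  rw [w4, if_pos h, if_neg h2]

lemma w4_op (i : ZMod 3) {m : ℤ} (h : ¬ m % 2 = 0) (h2 : 0 < m) :
    w4 i m = (0, 0, X (i+1) * (-X (i+1))^(m.natAbs/2), -(-X (i+1))^(m.natAbs/2)) := by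
  rw [w4, if_neg h, if_pos h2]

lemma w4_on (i : ZMod 3) {m : ℤ} (h : ¬ m % 2 = 0) (h2 : ¬ 0 < m) :
    w4 i m = (0, 0, X (i+2) * (-X (i+2))^(m.natAbs/2), -(-X (i+2))^(m.natAbs/2)) := by
  rw [w4, if_neg h, if_neg h2]

lemma w4_zero (i : ZMod 3) : w4 i 0 = (1, 1, 0, 0) := by
  rw [w4_en i (by norm_num) (by norm_num)]
  norm_num

/-- Composition of quadruples, matching `mcomp` on `mk4`s. -/
def compQuad (p q : R3 × R3 × R3 × R3) : R3 × R3 × R3 × R3 :=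
  (p.1 * q.1 + p.2.2.2 * q.2.2.1, p.2.1 * q.2.1 + p.2.2.1 * q.2.2.2,
   p.2.1 * q.2.2.1 + p.2.2.1 * q.1, p.1 * q.2.2.2 + p.2.2.2 * q.2.1)

lemma compQuad_one_right (p : R3 × R3 × R3 × R3) : compQuad p (1, 1, 0, 0) = p := by
  simp [compQuad]

lemma compQuad_one_left (p : R3 × R3 × R3 × R3) : compQuad (1, 1, 0, 0) p = p := by
  simp [compQuad]

lemma mcomp_mk4' (i j l : ZMod 3) (p q : R3 × R3 × R3 × R3) :
    mcomp (mk4 D d hD hsum j l p.1 p.2.1 p.2.2.1 p.2.2.2)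
        (mk4 D d hD hsum i j q.1 q.2.1 q.2.2.1 q.2.2.2)
      = mk4 D d hD hsum i l (compQuad p q).1 (compQuad p q).2.1
          (compQuad p q).2.2.1 (compQuad p q).2.2.2 := by
  rw [mcomp_mk4]
  rfl

/-- Strict multiplicativity of `w4` on composable words. -/
lemma w4_cmul_some (i : ZMod 3) {m₁ m₂ r : ℤ} (h : cmul m₂ m₁ = some r) :
    w4 i r = compQuad (w4 (tau 3 i m₁) m₂) (w4 i m₁) := by
  unfold cmul at h
  by_cases e1 : m₁ = 0
  · rw [if_pos e1] at h
    obtain rfl : m₂ = r := by injection h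
    subst e1
    rw [tau_even (by norm_num), w4_zero, compQuad_one_right]
  rw [if_neg e1] at h
  by_cases e2 : m₂ = 0
  · rw [if_pos e2] at h
    obtain rfl : m₁ = r := by injection h
    subst e2
    rw [w4_zero, compQuad_one_left]
  rw [if_neg e2] at h
  by_cases e3 : (0 < m₂) ↔ ¬ leftv m₁
  swap
  · rw [if_neg e3] at h; cases h
  rw [if_pos e3] at h
  have hr : (if 0 < m₁ then m₁ + (m₂.natAbs : ℤ) else m₁ - (m₂.natAbs : ℤ)) = r := by
    injection h
  unfold leftv at e3
  by_cases p1 : m₁ % 2 = 0 <;> by_cases s1 : 0 < m₁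
  · -- C1 : m₁ even positive, so m₂ > 0
    have s2 : 0 < m₂ := by rcases e3 with ⟨h3, h4⟩; by_contra hcon; omega
    rw [if_pos s1] at hr
    rw [tau_even p1]
    by_cases p2 : m₂ % 2 = 0
    · -- C1a : r even positive
      rw [w4_ep i p1 s1, w4_ep i p2 s2, w4_ep i (by omega) (by omega : 0 < r)]
      rw [show r.natAbs / 2 = m₂.natAbs / 2 + m₁.natAbs / 2 from by omega]
      simp only [compQuad, Prod.mk.injEq]
      refine ⟨by ring, by ring, by ring, by ring⟩
    · -- C1b : r odd positive
      rw [w4_ep i p1 s1, w4_op i p2 s2, w4_op i (by omega) (by omega : 0 < r)]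
      rw [show r.natAbs / 2 = m₂.natAbs / 2 + m₁.natAbs / 2 from by omega]
      simp only [compQuad, Prod.mk.injEq]
      refine ⟨by ring, by ring, by ring, by ring⟩
  · -- C2 : m₁ even negative, so m₂ < 0
    have s2 : ¬ 0 < m₂ := by
      intro hcon
      have := e3.mp hcon
      simp only [not_or, not_and] at this
      omega
    rw [if_neg s1] at hr
    rw [tau_even p1]
    by_cases p2 : m₂ % 2 = 0
    · rw [w4_en i p1 s1, w4_en i p2 s2, w4_en i (by omega) (by omega : ¬ 0 < r)]
      rw [show r.natAbs / 2 = m₂.natAbs / 2 + m₁.natAbs / 2 from by omega]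
      simp only [compQuad, Prod.mk.injEq]
      refine ⟨by ring, by ring, by ring, by ring⟩
    · rw [w4_en i p1 s1, w4_on i p2 s2, w4_on i (by omega) (by omega : ¬ 0 < r)]
      rw [show r.natAbs / 2 = m₂.natAbs / 2 + m₁.natAbs / 2 from by omega]
      simp only [compQuad, Prod.mk.injEq]
      refine ⟨by ring, by ring, by ring, by ring⟩
  · -- C3 : m₁ odd positive, so m₂ < 0
    have s2 : ¬ 0 < m₂ := by
      intro hcon
      have := e3.mp hcon
      simp only [not_or, not_and] at this
      omega
    rw [if_pos s1] at hr
    rw [tau_odd_pos p1 s1]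
    by_cases p2 : m₂ % 2 = 0
    · -- C3a : r odd positive
      rw [w4_op i p1 s1, w4_en (i+2) p2 s2, z3_22,
        w4_op i (by omega) (by omega : 0 < r)]
      rw [show r.natAbs / 2 = m₂.natAbs / 2 + m₁.natAbs / 2 from by omega]
      simp only [compQuad, Prod.mk.injEq]
      refine ⟨by ring, by ring, by ring, by ring⟩
    · -- C3b : r even positive
      rw [w4_op i p1 s1, w4_on (i+2) p2 s2, z3_22,
        w4_ep i (by omega) (by omega : 0 < r)]
      rw [show r.natAbs / 2 = m₂.natAbs / 2 + m₁.natAbs / 2 + 1 from by omega]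
      simp only [compQuad, Prod.mk.injEq]
      refine ⟨by ring, by ring, by ring, by ring⟩
  · -- C4 : m₁ odd negative, so m₂ > 0
    have s2 : 0 < m₂ := by rcases e3 with ⟨h3, h4⟩; by_contra hcon; omega
    rw [if_neg s1] at hr
    rw [tau_odd_neg p1 s1]
    by_cases p2 : m₂ % 2 = 0
    · -- C4a : r odd negative
      rw [w4_on i p1 s1, w4_ep (i+1) p2 s2, z3_11,
        w4_on i (by omega) (by omega : ¬ 0 < r)]
      rw [show r.natAbs / 2 = m₂.natAbs / 2 + m₁.natAbs / 2 from by omega]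
      simp only [compQuad, Prod.mk.injEq]
      refine ⟨by ring, by ring, by ring, by ring⟩
    · -- C4b : r even negative
      rw [w4_on i p1 s1, w4_op (i+1) p2 s2, z3_11,
        w4_en i (by omega) (by omega : ¬ 0 < r)]
      rw [show r.natAbs / 2 = m₂.natAbs / 2 + m₁.natAbs / 2 + 1 from by omega]
      simp only [compQuad, Prod.mk.injEq]
      refine ⟨by ring, by ring, by ring, by ring⟩

end Aux4
section Aux5

variable {D : ℕ} {d : ZMod 3 → ℤ} (hD : 1 ≤ D) (hsum : d 0 + d 1 + d 2 = (D : ℤ))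

/-- Non-composable words compose to coboundaries. -/
lemma w4_cmul_none (i j l : ZMod 3) {m₁ m₂ : ℤ} (hj : tau 3 i m₁ = j) (hl : tau 3 j m₂ = l)
    (h : cmul m₂ m₁ = none) :
    IsCob (mk4 D d hD hsum i l (compQuad (w4 j m₂) (w4 i m₁)).1
      (compQuad (w4 j m₂) (w4 i m₁)).2.1 (compQuad (w4 j m₂) (w4 i m₁)).2.2.1
      (compQuad (w4 j m₂) (w4 i m₁)).2.2.2) := by
  unfold cmul at h
  by_cases e1 : m₁ = 0
  · rw [if_pos e1] at h; cases h
  rw [if_neg e1] at h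
  by_cases e2 : m₂ = 0
  · rw [if_pos e2] at h; cases h
  rw [if_neg e2] at h
  by_cases e3 : (0 < m₂) ↔ ¬ leftv m₁
  · rw [if_pos e3] at h; cases h
  unfold leftv at e3
  by_cases p1 : m₁ % 2 = 0 <;> by_cases s1 : 0 < m₁
  · -- N1 : m₁ even positive, mismatched m₂ ≤ 0
    have s2 : ¬ 0 < m₂ := by
      intro hcon
      exact e3 (iff_of_true hcon (by simp only [not_or, not_and]; omega))
    have hj' : j = i := by rw [← hj, tau_even p1]
    rw [hj'] at hl ⊢
    obtain ⟨k₁, hk₁⟩ : ∃ k, m₁.natAbs / 2 = k + 1 := ⟨m₁.natAbs / 2 - 1, by omega⟩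
    by_cases p2 : m₂ % 2 = 0
    · -- N1a : target l = i, even coboundary
      have hl' : l = i := by rw [← hl, tau_even p2]
      rw [hl']
      rw [w4_ep i p1 s1, w4_en i p2 s2]
      obtain ⟨k₂, hk₂⟩ : ∃ k, m₂.natAbs / 2 = k + 1 := ⟨m₂.natAbs / 2 - 1, by omega⟩
      refine isCob_mk4 hD hsum i i 0
        ((-X (i+1))^k₁ * (-X (i+2))^k₂) 0 0 ?_ ?_ ?_ ?_ <;>
        simp only [compQuad, hk₁, hk₂] <;> ring
    · -- N1b : target l = i + 1, odd coboundary
      have hl' : l = i + 1 := by rw [← hl, tau_odd_neg p2 s2]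
      rw [hl']
      rw [w4_ep i p1 s1, w4_on i p2 s2]
      refine isCob_mk4 hD hsum i (i+1) 0 0 0
        ((-X (i+2))^(m₂.natAbs / 2) * (-X (i+1))^k₁) ?_ ?_ ?_ ?_ <;>
        simp only [compQuad, hk₁] <;> ring
  · -- N2 : m₁ even negative, mismatched m₂ > 0
    have s2 : 0 < m₂ := by
      by_contra hcon
      exact e3 (iff_of_false hcon (by simp only [not_or, not_and, not_forall, not_not]; omega))
    have hj' : j = i := by rw [← hj, tau_even p1]
    rw [hj'] at hl ⊢
    obtain ⟨k₁, hk₁⟩ : ∃ k, m₁.natAbs / 2 = k + 1 := ⟨m₁.natAbs / 2 - 1, by omega⟩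
    by_cases p2 : m₂ % 2 = 0
    · -- N2a : target l = i, even coboundary
      have hl' : l = i := by rw [← hl, tau_even p2]
      rw [hl']
      rw [w4_en i p1 s1, w4_ep i p2 s2]
      obtain ⟨k₂, hk₂⟩ : ∃ k, m₂.natAbs / 2 = k + 1 := ⟨m₂.natAbs / 2 - 1, by omega⟩
      refine isCob_mk4 hD hsum i i 0
        ((-X (i+1))^k₂ * (-X (i+2))^k₁) 0 0 ?_ ?_ ?_ ?_ <;>
        simp only [compQuad, hk₁, hk₂] <;> ring
    · -- N2b : target l = i + 2, odd coboundary
      have hl' : l = i + 2 := by rw [← hl, tau_odd_pos p2 s2]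
      rw [hl']
      rw [w4_en i p1 s1, w4_op i p2 s2]
      refine isCob_mk4 hD hsum i (i+2) 0 0 0
        ((-X (i+1))^(m₂.natAbs / 2) * (-X (i+2))^k₁) ?_ ?_ ?_ ?_ <;>
        simp only [compQuad, hk₁] <;> ring
  · -- N3 : m₁ odd positive (j = i+2), mismatched m₂ > 0
    have s2 : 0 < m₂ := by
      by_contra hcon
      exact e3 (iff_of_false hcon (by simp only [not_or, not_and, not_forall, not_not]; omega))
    have hj' : j = i + 2 := by rw [← hj, tau_odd_pos p1 s1]
    rw [hj'] at hl ⊢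
    by_cases p2 : m₂ % 2 = 0
    · -- N3a : target l = i + 2, odd coboundary
      have hl' : l = i + 2 := by rw [← hl, tau_even p2]
      rw [hl']
      rw [w4_op i p1 s1, w4_ep (i+2) p2 s2, z3_21]
      obtain ⟨k₂, hk₂⟩ : ∃ k, m₂.natAbs / 2 = k + 1 := ⟨m₂.natAbs / 2 - 1, by omega⟩
      refine isCob_mk4 hD hsum i (i+2) 0 0
        (-((-X i)^k₂ * (-X (i+1))^(m₁.natAbs / 2))) 0 ?_ ?_ ?_ ?_ <;>
        simp only [compQuad, z3_21, z3_22, hk₂] <;> ring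
    · -- N3b : target l = i + 1, even coboundary
      have hl' : l = i + 1 := by rw [← hl, tau_odd_pos p2 s2, z3_22]
      rw [hl']
      rw [w4_op i p1 s1, w4_op (i+2) p2 s2, z3_21]
      refine isCob_mk4 hD hsum i (i+1)
        (-((-X i)^(m₂.natAbs / 2) * (-X (i+1))^(m₁.natAbs / 2))) 0 0 0 ?_ ?_ ?_ ?_ <;>
        simp only [compQuad, z3_11, z3_12] <;> ring
  · -- N4 : m₁ odd negative (j = i+1), mismatched m₂ ≤ 0
    have s2 : ¬ 0 < m₂ := by
      intro hcon
      exact e3 (iff_of_true hcon (by simp only [not_or, not_and]; omega))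
    have hj' : j = i + 1 := by rw [← hj, tau_odd_neg p1 s1]
    rw [hj'] at hl ⊢
    by_cases p2 : m₂ % 2 = 0
    · -- N4a : target l = i + 1, odd coboundary
      have hl' : l = i + 1 := by rw [← hl, tau_even p2]
      rw [hl']
      rw [w4_on i p1 s1, w4_en (i+1) p2 s2, z3_12]
      obtain ⟨k₂, hk₂⟩ : ∃ k, m₂.natAbs / 2 = k + 1 := ⟨m₂.natAbs / 2 - 1, by omega⟩
      refine isCob_mk4 hD hsum i (i+1) 0 0
        (-((-X i)^k₂ * (-X (i+2))^(m₁.natAbs / 2))) 0 ?_ ?_ ?_ ?_ <;>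
        simp only [compQuad, z3_11, z3_12, hk₂] <;> ring
    · -- N4b : target l = i + 2, even coboundary
      have hl' : l = i + 2 := by rw [← hl, tau_odd_neg p2 s2, z3_11]
      rw [hl']
      rw [w4_on i p1 s1, w4_on (i+1) p2 s2, z3_12]
      refine isCob_mk4 hD hsum i (i+2)
        (-((-X i)^(m₂.natAbs / 2) * (-X (i+2))^(m₁.natAbs / 2))) 0 0 0 ?_ ?_ ?_ ?_ <;>
        simp only [compQuad, z3_21, z3_22] <;> ring

/-- Composition compatibility on basis words. -/
lemma Phi_comp_single (i j l : ZMod 3) (b₂ : {c : ℤ // tau 3 j c = l})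
    (b₁ : {c : ℤ // tau 3 i c = j}) :
    IsCob ((Phi D d hD hsum i l (bm 3 ℂ i l b₂.1 b₁.1))
      - mcomp (Phi D d hD hsum j l (Finsupp.single b₂ 1))
          (Phi D d hD hsum i j (Finsupp.single b₁ 1))) := by
  rw [Phi_single, Phi_single, map_one, one_smul, one_smul, mcomp_mk4']
  rcases hc : cmul b₂.1 b₁.1 with _ | r
  · rw [bm, hc, obm, Phi_zero, zero_sub]
    apply IsCob_neg
    exact w4_cmul_none hD hsum i j l b₁.2 b₂.2 hc
  · have htau : tau 3 i r = l := by rw [tau_cmul i hc, b₁.2, b₂.2]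
    rw [bm, hc, obm, dif_pos htau, Phi_single, map_one, one_smul]
    have hw : w4 i r = compQuad (w4 j b₂.1) (w4 i b₁.1) := by
      have := w4_cmul_some i hc
      rwa [b₁.2] at this
    rw [hw, sub_self]
    exact isCob_zero hD hsum i l

lemma mcomp_add_left {P S U : MFQ D d} (f g : MMaps S U) (q : MMaps P S) :
    mcomp (f + g) q = mcomp f q + mcomp g q := by
  unfold mcomp
  refine Prod.ext (Prod.ext ?_ ?_) (Prod.ext ?_ ?_) <;>
    simp only [Prod.fst_add, Prod.snd_add, LinearMap.add_comp, Prod.fst_add] <;> abel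

lemma mcomp_add_right {P S U : MFQ D d} (f : MMaps S U) (q q' : MMaps P S) :
    mcomp f (q + q') = mcomp f q + mcomp f q' := by
  unfold mcomp
  refine Prod.ext (Prod.ext ?_ ?_) (Prod.ext ?_ ?_) <;>
    simp only [Prod.fst_add, Prod.snd_add, LinearMap.comp_add] <;> abel

lemma mcomp_smul_left {P S U : MFQ D d} (r : R3) (f : MMaps S U) (q : MMaps P S) :
    mcomp (r • f) q = r • mcomp f q := by
  unfold mcomp
  refine Prod.ext (Prod.ext ?_ ?_) (Prod.ext ?_ ?_) <;>
    simp only [Prod.smul_fst, Prod.smul_snd, LinearMap.smul_comp, smul_add]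

lemma mcomp_smul_right {P S U : MFQ D d} (r : R3) (f : MMaps S U) (q : MMaps P S) :
    mcomp f (r • q) = r • mcomp f q := by
  unfold mcomp
  refine Prod.ext (Prod.ext ?_ ?_) (Prod.ext ?_ ?_) <;>
    simp only [Prod.smul_fst, Prod.smul_snd, LinearMap.comp_smul, smul_add]

lemma mcomp_zero_left {P S U : MFQ D d} (q : MMaps P S) :
    mcomp (0 : MMaps S U) q = 0 := by
  unfold mcomp
  refine Prod.ext (Prod.ext ?_ ?_) (Prod.ext ?_ ?_) <;>
    simp

lemma mcomp_zero_right {P S U : MFQ D d} (f : MMaps S U) :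
    mcomp f (0 : MMaps P S) = 0 := by
  unfold mcomp
  refine Prod.ext (Prod.ext ?_ ?_) (Prod.ext ?_ ?_) <;>
    simp

/-- Item 7: composition up to coboundary. -/
lemma Phi_comp (i j l : ZMod 3) (g : AHom 3 ℂ j l) (f : AHom 3 ℂ i j) :
    IsCob (Phi D d hD hsum i l (Acomp 3 ℂ g f)
      - mcomp (Phi D d hD hsum j l g) (Phi D d hD hsum i j f)) := by
  induction f using Finsupp.induction_linear with
  | zero =>
      rw [Acomp_zero_right, Phi_zero, Phi_zero, mcomp_zero_right, sub_zero]
      exact isCob_zero hD hsum i l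
  | add f f' hf hf' =>
      rw [Acomp_add_right, Phi_add, Phi_add, mcomp_add_right]
      have := IsCob_add hf hf'
      rwa [show Phi D d hD hsum i l (Acomp 3 ℂ g f)
          - mcomp (Phi D d hD hsum j l g) (Phi D d hD hsum i j f)
          + (Phi D d hD hsum i l (Acomp 3 ℂ g f')
          - mcomp (Phi D d hD hsum j l g) (Phi D d hD hsum i j f'))
          = Phi D d hD hsum i l (Acomp 3 ℂ g f) + Phi D d hD hsum i l (Acomp 3 ℂ g f')
          - (mcomp (Phi D d hD hsum j l g) (Phi D d hD hsum i j f)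
            + mcomp (Phi D d hD hsum j l g) (Phi D d hD hsum i j f')) from by abel] at this
  | single b₁ c₁ =>
    induction g using Finsupp.induction_linear with
    | zero =>
        rw [Acomp_zero_left, Phi_zero, Phi_zero, mcomp_zero_left, sub_zero]
        exact isCob_zero hD hsum i l
    | add g g' hg hg' =>
        rw [Acomp_add_left, Phi_add, Phi_add, mcomp_add_left]
        have := IsCob_add hg hg'
        rwa [show Phi D d hD hsum i l (Acomp 3 ℂ g (Finsupp.single b₁ c₁))
            - mcomp (Phi D d hD hsum j l g) (Phi D d hD hsum i j (Finsupp.single b₁ c₁))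
            + (Phi D d hD hsum i l (Acomp 3 ℂ g' (Finsupp.single b₁ c₁))
            - mcomp (Phi D d hD hsum j l g') (Phi D d hD hsum i j (Finsupp.single b₁ c₁)))
            = Phi D d hD hsum i l (Acomp 3 ℂ g (Finsupp.single b₁ c₁))
              + Phi D d hD hsum i l (Acomp 3 ℂ g' (Finsupp.single b₁ c₁))
            - (mcomp (Phi D d hD hsum j l g) (Phi D d hD hsum i j (Finsupp.single b₁ c₁))
              + mcomp (Phi D d hD hsum j l g') (Phi D d hD hsum i j (Finsupp.single b₁ c₁)))
            from by abel] at this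
    | single b₂ c₂ =>
        have e2 : (Finsupp.single b₂ c₂ : AHom 3 ℂ j l) = c₂ • Finsupp.single b₂ 1 := by
          rw [Finsupp.smul_single, smul_eq_mul, mul_one]
        have e1 : (Finsupp.single b₁ c₁ : AHom 3 ℂ i j) = c₁ • Finsupp.single b₁ 1 := by
          rw [Finsupp.smul_single, smul_eq_mul, mul_one]
        rw [Acomp_single_single, e1, e2, Phi_smul hD hsum i l (c₂ * c₁), Phi_smul hD hsum j l c₂,
          Phi_smul hD hsum i j c₁, mcomp_smul_left, mcomp_smul_right, smul_smul, ← map_mul]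
        have := IsCob_smul ((algebraMap ℂ R3) (c₂ * c₁)) (Phi_comp_single hD hsum i j l b₂ b₁)
        rwa [smul_sub] at this

end Aux5
section Aux6

variable {D : ℕ} {d : ZMod 3 → ℤ} (hD : 1 ≤ D) (hsum : d 0 + d 1 + d 2 = (D : ℤ))

lemma Phi_Aid (i : ZMod 3) :
    Phi D d hD hsum i i (Aid 3 ℂ i) = idMS (TT D d hD hsum i) := by
  rw [Aid, Phi_single, map_one, one_smul, w4_zero]
  refine Prod.ext (Prod.ext ?_ ?_) (Prod.ext ?_ ?_)
  · exact mM_one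
  · exact mM_one
  · exact mM_zero
  · exact mM_zero

lemma Phi_uElem (i : ZMod 3) :
    Phi D d hD hsum i (i+1) (uElem 3 ℂ i)
      = ((0, uMF D d hD hsum i) : MMaps (TT D d hD hsum i) (TT D d hD hsum (i + 1))) := by
  rw [uElem, Phi_single, map_one, one_smul]
  rw [show w4 i (-1) = (0, 0, X (i+2), -1) from by
    rw [w4_on i (by norm_num) (by norm_num)]; norm_num]
  refine Prod.ext (Prod.ext ?_ ?_) (Prod.ext ?_ ?_)
  · exact mM_zero
  · exact mM_zero
  · rfl
  · rfl

lemma Phi_vElem (i : ZMod 3) :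
    Phi D d hD hsum i (i-1) (vElem 3 ℂ i)
      = ((0, vMF D d hD hsum i) : MMaps (TT D d hD hsum i) (TT D d hD hsum (i - 1))) := by
  rw [vElem, Phi_single, map_one, one_smul]
  rw [show w4 i 1 = (0, 0, X (i+1), -1) from by
    rw [w4_op i (by norm_num) (by norm_num)]; norm_num]
  refine Prod.ext (Prod.ext ?_ ?_) (Prod.ext ?_ ?_)
  · exact mM_zero
  · exact mM_zero
  · rfl
  · rfl

end Aux6
section Aux7

variable {D : ℕ} {d : ZMod 3 → ℤ}

lemma isHomogMap_mM {s t γ : ℚ} {c : R3} (hc : c ∈ Rgr D d (γ + s - t)) :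
    IsHomogMap (D := D) (d := d) (fun _ : Fin 1 => s) (fun _ : Fin 1 => t) γ (mM c) := by
  intro γ' v hv b
  have h1 : IsWeightedHomogeneous (wt D d) c (γ + s - t) :=
    (mem_weightedHomogeneousSubmodule _ _ _ _).mp hc
  have h2 : IsWeightedHomogeneous (wt D d) (v b) (γ' - s) :=
    (mem_weightedHomogeneousSubmodule _ _ _ _).mp (hv b)
  have h3 := h1.mul h2
  show c * v b ∈ Rgr D d (γ' + γ - t)
  rw [Rgr, mem_weightedHomogeneousSubmodule]
  have hdeg : γ' + γ - t = (γ + s - t) + (γ' - s) := by ring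
  rw [hdeg]
  exact h3

lemma negX_pow_mem (t : ZMod 3) (a : ℕ) :
    ((-X t : R3))^a ∈ Rgr D d ((a : ℚ) * wt D d t) := by
  induction a with
  | zero =>
      rw [Rgr, mem_weightedHomogeneousSubmodule]
      simpa using isWeightedHomogeneous_one (R := ℂ) (wt D d)
  | succ n ih =>
      have hx : IsWeightedHomogeneous (wt D d) (-X t : R3) (wt D d t) := by
        have := (isWeightedHomogeneous_C (wt D d) (-1 : ℂ)).mul
          (isWeightedHomogeneous_X ℂ (wt D d) t)
        rw [zero_add] at this
        have he : (C (-1 : ℂ)) * (X t : R3) = -X t := by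
          rw [map_neg, map_one]; ring
        rwa [he] at this
      have ihw : IsWeightedHomogeneous (wt D d) (((-X t : R3))^n) ((n : ℚ) * wt D d t) :=
        (mem_weightedHomogeneousSubmodule _ _ _ _).mp ih
      have h3 := ihw.mul hx
      rw [Rgr, mem_weightedHomogeneousSubmodule, pow_succ]
      have hdeg : ((n + 1 : ℕ) : ℚ) * wt D d t = (n : ℚ) * wt D d t + wt D d t := by
        push_cast; ring
      rw [hdeg]
      exact h3

lemma X_negX_pow_mem (t : ZMod 3) (a : ℕ) :
    (X t * (-X t)^a : R3) ∈ Rgr D d (((a : ℚ) + 1) * wt D d t) := by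
  have hx : IsWeightedHomogeneous (wt D d) (X t : R3) (wt D d t) :=
    isWeightedHomogeneous_X ℂ (wt D d) t
  have ha : IsWeightedHomogeneous (wt D d) (((-X t : R3))^a) ((a : ℚ) * wt D d t) :=
    (mem_weightedHomogeneousSubmodule _ _ _ _).mp (negX_pow_mem t a)
  have h3 := hx.mul ha
  rw [Rgr, mem_weightedHomogeneousSubmodule]
  have hdeg : ((a : ℚ) + 1) * wt D d t = wt D d t + (a : ℚ) * wt D d t := by ring
  rw [hdeg]
  exact h3

/-- The grading functions of the statement. -/
abbrev Pw (D : ℕ) (d : ZMod 3 → ℤ) : ZMod 3 → ℤ := fun i' => 2 * d i' + 2 * d (i' + 1) - (D : ℤ)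
abbrev Qw (D : ℕ) (d : ZMod 3 → ℤ) : ZMod 3 → ℤ := fun i' => 2 * d (i' + 1) + 2 * d (i' + 2) - (D : ℤ)

lemma hDq : (1 : ℕ) ≤ D → ((D : ℚ)) ≠ 0 := fun h => by
  simp only [ne_eq, Nat.cast_eq_zero]; omega

lemma dtq (hsum : d 0 + d 1 + d 2 = (D : ℤ)) (i : ZMod 3) : (d i : ℚ) + d (i + 1) + d (i + 2) = (D : ℚ) := by
  exact_mod_cast dtriple D d hsum i

/-- Numerical identity: even positive words. -/
lemma deg_ep (hD : 1 ≤ D) (hsum : d 0 + d 1 + d 2 = (D : ℤ)) (i : ZMod 3) {m : ℤ} (h : m % 2 = 0) (h2 : 0 < m) :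
    ((deg (Pw D d) (Qw D d) i m : ℤ) : ℚ) / (D : ℚ)
      = ((m.natAbs / 2 : ℕ) : ℚ) * wt D d (i+1) := by
  have e1 : (m.natAbs + 1) / 2 = m.natAbs / 2 := by omega
  rw [deg, if_pos h2, e1]
  have hd := dtq hsum i
  have hD0 := hDq (D := D) hD
  set a : ℕ := m.natAbs / 2 with ha
  unfold wt Pw Qw
  field_simp
  push_cast
  linear_combination (2 * ((m.natAbs / 2 : ℕ) : ℚ)) * hd

/-- Numerical identity: even non-positive words. -/
lemma deg_en (hD : 1 ≤ D) (hsum : d 0 + d 1 + d 2 = (D : ℤ)) (i : ZMod 3) {m : ℤ} (h : m % 2 = 0) (h2 : ¬ 0 < m) :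
    ((deg (Pw D d) (Qw D d) i m : ℤ) : ℚ) / (D : ℚ)
      = ((m.natAbs / 2 : ℕ) : ℚ) * wt D d (i+2) := by
  have e1 : (m.natAbs + 1) / 2 = m.natAbs / 2 := by omega
  rw [deg, if_neg h2, e1]
  have hd := dtq hsum i
  have hD0 := hDq (D := D) hD
  set a : ℕ := m.natAbs / 2 with ha
  unfold wt Pw Qw
  rw [z3_11, z3_12]
  field_simp
  push_cast
  linear_combination (2 * ((m.natAbs / 2 : ℕ) : ℚ)) * hd

/-- Numerical identities: odd positive words (target `i+2`). -/
lemma deg_op1 (hD : 1 ≤ D) (hsum : d 0 + d 1 + d 2 = (D : ℤ)) (i : ZMod 3) {m : ℤ} (h : ¬ m % 2 = 0) (h2 : 0 < m) :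
    (((m.natAbs / 2 : ℕ) : ℚ) + 1) * wt D d (i+1)
      = ((deg (Pw D d) (Qw D d) i m : ℤ) : ℚ) / (D : ℚ) + 0 - (wt D d (i+2) - 1) := by
  have e1 : (m.natAbs + 1) / 2 = m.natAbs / 2 + 1 := by omega
  rw [deg, if_pos h2, e1]
  have hd := dtq hsum i
  have hD0 := hDq (D := D) hD
  set a : ℕ := m.natAbs / 2 with ha
  unfold wt Pw Qw
  field_simp
  push_cast
  linear_combination (-2 * (a : ℚ)) * hd

lemma deg_op0 (hD : 1 ≤ D) (hsum : d 0 + d 1 + d 2 = (D : ℤ)) (i : ZMod 3) {m : ℤ} (h : ¬ m % 2 = 0) (h2 : 0 < m) :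
    ((m.natAbs / 2 : ℕ) : ℚ) * wt D d (i+1)
      = ((deg (Pw D d) (Qw D d) i m : ℤ) : ℚ) / (D : ℚ) + (wt D d i - 1) - 0 := by
  have e1 : (m.natAbs + 1) / 2 = m.natAbs / 2 + 1 := by omega
  rw [deg, if_pos h2, e1]
  have hd := dtq hsum i
  have hD0 := hDq (D := D) hD
  set a : ℕ := m.natAbs / 2 with ha
  unfold wt Pw Qw
  field_simp
  push_cast
  linear_combination (-2 * ((a : ℚ) + 1)) * hd

/-- Numerical identities: odd negative words (target `i+1`). -/
lemma deg_on1 (hD : 1 ≤ D) (hsum : d 0 + d 1 + d 2 = (D : ℤ)) (i : ZMod 3) {m : ℤ} (h : ¬ m % 2 = 0) (h2 : ¬ 0 < m) :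
    (((m.natAbs / 2 : ℕ) : ℚ) + 1) * wt D d (i+2)
      = ((deg (Pw D d) (Qw D d) i m : ℤ) : ℚ) / (D : ℚ) + 0 - (wt D d (i+1) - 1) := by
  have e1 : (m.natAbs + 1) / 2 = m.natAbs / 2 + 1 := by omega
  rw [deg, if_neg h2, e1]
  have hd := dtq hsum i
  have hD0 := hDq (D := D) hD
  set a : ℕ := m.natAbs / 2 with ha
  unfold wt Pw Qw
  rw [z3_11, z3_12]
  field_simp
  push_cast
  linear_combination (-2 * (a : ℚ)) * hd

lemma deg_on0 (hD : 1 ≤ D) (hsum : d 0 + d 1 + d 2 = (D : ℤ)) (i : ZMod 3) {m : ℤ} (h : ¬ m % 2 = 0) (h2 : ¬ 0 < m) :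
    ((m.natAbs / 2 : ℕ) : ℚ) * wt D d (i+2)
      = ((deg (Pw D d) (Qw D d) i m : ℤ) : ℚ) / (D : ℚ) + (wt D d i - 1) - 0 := by
  have e1 : (m.natAbs + 1) / 2 = m.natAbs / 2 + 1 := by omega
  rw [deg, if_neg h2, e1]
  have hd := dtq hsum i
  have hD0 := hDq (D := D) hD
  set a : ℕ := m.natAbs / 2 with ha
  unfold wt Pw Qw
  rw [z3_11, z3_12]
  field_simp
  push_cast
  linear_combination (-2 * ((a : ℚ) + 1)) * hd

end Aux7
section Aux8

variable {D : ℕ} {d : ZMod 3 → ℤ}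

lemma PhiP_1 {i j : ZMod 3} (x : AHom 3 ℂ i j) :
    (PhiP i x).1 = x.sum fun b c => (algebraMap ℂ R3 c) * (w4 i b.1).1 := by
  unfold PhiP Finsupp.sum
  rw [Prod.fst_sum]
  rfl

lemma PhiP_21 {i j : ZMod 3} (x : AHom 3 ℂ i j) :
    (PhiP i x).2.1 = x.sum fun b c => (algebraMap ℂ R3 c) * (w4 i b.1).2.1 := by
  unfold PhiP Finsupp.sum
  rw [Prod.snd_sum, Prod.fst_sum]
  rfl

lemma PhiP_221 {i j : ZMod 3} (x : AHom 3 ℂ i j) :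
    (PhiP i x).2.2.1 = x.sum fun b c => (algebraMap ℂ R3 c) * (w4 i b.1).2.2.1 := by
  unfold PhiP Finsupp.sum
  rw [Prod.snd_sum, Prod.snd_sum, Prod.fst_sum]
  rfl

lemma PhiP_222 {i j : ZMod 3} (x : AHom 3 ℂ i j) :
    (PhiP i x).2.2.2 = x.sum fun b c => (algebraMap ℂ R3 c) * (w4 i b.1).2.2.2 := by
  unfold PhiP Finsupp.sum
  rw [Prod.snd_sum, Prod.snd_sum, Prod.snd_sum]
  rfl

lemma par_eq_zero {m : ℤ} (h : par m = 0) : m % 2 = 0 := by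
  have := (ZMod.intCast_zmod_eq_zero_iff_dvd m 2).mp h
  omega

lemma par_eq_one {m : ℤ} (h : par m = 1) : ¬ m % 2 = 0 := by
  intro hc
  have h2 : (2 : ℤ) ∣ m := by omega
  have := (ZMod.intCast_zmod_eq_zero_iff_dvd m 2).mpr h2
  rw [par] at h
  rw [h] at this
  exact one_ne_zero this

variable (hD : 1 ≤ D) (hsum : d 0 + d 1 + d 2 = (D : ℤ))

/-- Item 4 : even graded pieces. -/
lemma Phi_grQ_even (i j : ZMod 3) (γ : ℚ) (x : AHom 3 ℂ i j)
    (hx : x ∈ grQ D (Pw D d) (Qw D d) i j (γ, 0)) :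
    (Phi D d hD hsum i j x).2 = 0 ∧
    IsHomogMap (D := D) (d := d) (TT D d hD hsum i).σ₁ (TT D d hD hsum j).σ₁ γ
      (Phi D d hD hsum i j x).1.1 ∧
    IsHomogMap (D := D) (d := d) (TT D d hD hsum i).σ₀ (TT D d hD hsum j).σ₀ γ
      (Phi D d hD hsum i j x).1.2 := by
  have hsupp := (Finsupp.mem_supported ℂ x).mp hx
  have hkey : ∀ b ∈ x.support, b.1 % 2 = 0 ∧
      ((deg (Pw D d) (Qw D d) i b.1 : ℤ) : ℚ) / (D : ℚ) = γ := by
    intro b hb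
    have := hsupp hb
    simp only [Set.mem_setOf_eq, Prod.mk.injEq] at this
    exact ⟨par_eq_zero this.2, this.1⟩
  have hmem1 : (PhiP i x).1 ∈ Rgr D d γ := by
    rw [PhiP_1]
    refine Submodule.finsuppSum_mem _ _ _ _ fun b hb => ?_
    obtain ⟨hp, hd⟩ := hkey b (Finsupp.mem_support_iff.mpr hb)
    rw [algebraMap_eq, ← smul_eq_C_mul]
    refine Submodule.smul_mem _ _ ?_
    by_cases hs : 0 < b.1
    · rw [w4_ep i hp hs]
      have := negX_pow_mem (D := D) (d := d) (i+1) (b.1.natAbs / 2)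
      rwa [show ((b.1.natAbs / 2 : ℕ) : ℚ) * wt D d (i+1) = γ from by
        rw [← hd, deg_ep hD hsum i hp hs]] at this
    · rw [w4_en i hp hs]
      have := negX_pow_mem (D := D) (d := d) (i+2) (b.1.natAbs / 2)
      rwa [show ((b.1.natAbs / 2 : ℕ) : ℚ) * wt D d (i+2) = γ from by
        rw [← hd, deg_en hD hsum i hp hs]] at this
  have heq21 : (PhiP i x).2.1 = (PhiP i x).1 := by
    rw [PhiP_1, PhiP_21]
    refine Finsupp.sum_congr fun b hb => ?_
    obtain ⟨hp, _⟩ := hkey b hb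
    by_cases hs : 0 < b.1
    · simp [w4_ep i hp hs]
    · simp [w4_en i hp hs]
  have ho1 : (PhiP i x).2.2.1 = 0 := by
    rw [PhiP_221]
    unfold Finsupp.sum
    refine Finset.sum_eq_zero fun b hb => ?_
    obtain ⟨hp, _⟩ := hkey b hb
    by_cases hs : 0 < b.1
    · simp [w4_ep i hp hs]
    · simp [w4_en i hp hs]
  have ho0 : (PhiP i x).2.2.2 = 0 := by
    rw [PhiP_222]
    unfold Finsupp.sum
    refine Finset.sum_eq_zero fun b hb => ?_
    obtain ⟨hp, _⟩ := hkey b hb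
    by_cases hs : 0 < b.1
    · simp [w4_ep i hp hs]
    · simp [w4_en i hp hs]
  have hji : ∀ b ∈ x.support, j = i := fun b hb => by
    rw [← b.2, tau_even (hkey b hb).1]
  refine ⟨?_, ?_, ?_⟩
  · show (mM ((PhiP i x).2.2.1), mM ((PhiP i x).2.2.2)) = 0
    rw [ho1, ho0, mM_zero]
    rfl
  · show IsHomogMap (D := D) (d := d) (fun _ : Fin 1 => (0:ℚ)) (fun _ : Fin 1 => (0:ℚ)) γ
      (mM ((PhiP i x).1))
    refine isHomogMap_mM ?_
    rwa [show γ + 0 - 0 = γ from by ring]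
  · show IsHomogMap (D := D) (d := d)
      (fun _ : Fin 1 => 2 * (d i : ℚ) / (D : ℚ) - 1)
      (fun _ : Fin 1 => 2 * (d j : ℚ) / (D : ℚ) - 1) γ (mM ((PhiP i x).2.1))
    refine isHomogMap_mM ?_
    rw [heq21]
    -- reduce to the case `j = i` term by term
    rw [PhiP_1]
    refine Submodule.finsuppSum_mem _ _ _ _ fun b hb => ?_
    have hj := hji b (Finsupp.mem_support_iff.mpr hb)
    subst hj
    rw [show γ + (2 * (d j : ℚ) / (D : ℚ) - 1) - (2 * (d j : ℚ) / (D : ℚ) - 1) = γ from by ring]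
    -- now same membership as hmem1, term by term
    obtain ⟨hp, hd⟩ := hkey b (Finsupp.mem_support_iff.mpr hb)
    rw [algebraMap_eq, ← smul_eq_C_mul]
    refine Submodule.smul_mem _ _ ?_
    by_cases hs : 0 < b.1
    · rw [w4_ep j hp hs]
      have := negX_pow_mem (D := D) (d := d) (j+1) (b.1.natAbs / 2)
      rwa [show ((b.1.natAbs / 2 : ℕ) : ℚ) * wt D d (j+1) = γ from by
        rw [← hd, deg_ep hD hsum j hp hs]] at this
    · rw [w4_en j hp hs]
      have := negX_pow_mem (D := D) (d := d) (j+2) (b.1.natAbs / 2)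
      rwa [show ((b.1.natAbs / 2 : ℕ) : ℚ) * wt D d (j+2) = γ from by
        rw [← hd, deg_en hD hsum j hp hs]] at this

/-- Item 5 : odd graded pieces. -/
lemma Phi_grQ_odd (i j : ZMod 3) (γ : ℚ) (x : AHom 3 ℂ i j)
    (hx : x ∈ grQ D (Pw D d) (Qw D d) i j (γ, 1)) :
    (Phi D d hD hsum i j x).1 = 0 ∧
    IsHomogMap (D := D) (d := d) (TT D d hD hsum i).σ₁ (TT D d hD hsum j).σ₀ γ
      (Phi D d hD hsum i j x).2.1 ∧
    IsHomogMap (D := D) (d := d) (TT D d hD hsum i).σ₀ (TT D d hD hsum j).σ₁ γ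
      (Phi D d hD hsum i j x).2.2 := by
  have hsupp := (Finsupp.mem_supported ℂ x).mp hx
  have hkey : ∀ b ∈ x.support, ¬ b.1 % 2 = 0 ∧
      ((deg (Pw D d) (Qw D d) i b.1 : ℤ) : ℚ) / (D : ℚ) = γ := by
    intro b hb
    have := hsupp hb
    simp only [Set.mem_setOf_eq, Prod.mk.injEq] at this
    exact ⟨par_eq_one this.2, this.1⟩
  have he1 : (PhiP i x).1 = 0 := by
    rw [PhiP_1]
    unfold Finsupp.sum
    refine Finset.sum_eq_zero fun b hb => ?_
    obtain ⟨hp, _⟩ := hkey b hb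
    by_cases hs : 0 < b.1
    · simp [w4_op i hp hs]
    · simp [w4_on i hp hs]
  have he0 : (PhiP i x).2.1 = 0 := by
    rw [PhiP_21]
    unfold Finsupp.sum
    refine Finset.sum_eq_zero fun b hb => ?_
    obtain ⟨hp, _⟩ := hkey b hb
    by_cases hs : 0 < b.1
    · simp [w4_op i hp hs]
    · simp [w4_on i hp hs]
  refine ⟨?_, ?_, ?_⟩
  · show (mM ((PhiP i x).1), mM ((PhiP i x).2.1)) = 0
    rw [he1, he0, mM_zero]
    rfl
  · show IsHomogMap (D := D) (d := d) (fun _ : Fin 1 => (0:ℚ))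
      (fun _ : Fin 1 => 2 * (d j : ℚ) / (D : ℚ) - 1) γ (mM ((PhiP i x).2.2.1))
    refine isHomogMap_mM ?_
    rw [PhiP_221]
    refine Submodule.finsuppSum_mem _ _ _ _ fun b hb => ?_
    obtain ⟨hp, hd⟩ := hkey b (Finsupp.mem_support_iff.mpr hb)
    rw [algebraMap_eq, ← smul_eq_C_mul]
    refine Submodule.smul_mem _ _ ?_
    by_cases hs : 0 < b.1
    · have hj : j = i + 2 := by rw [← b.2, tau_odd_pos hp hs]
      subst hj
      rw [w4_op i hp hs]
      have := X_negX_pow_mem (D := D) (d := d) (i+1) (b.1.natAbs / 2)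
      rwa [show (((b.1.natAbs / 2 : ℕ) : ℚ) + 1) * wt D d (i+1)
          = γ + 0 - (2 * (d (i+2) : ℚ) / (D : ℚ) - 1) from by
        rw [← hd, deg_op1 hD hsum i hp hs]; rfl] at this
    · have hj : j = i + 1 := by rw [← b.2, tau_odd_neg hp hs]
      subst hj
      rw [w4_on i hp hs]
      have := X_negX_pow_mem (D := D) (d := d) (i+2) (b.1.natAbs / 2)
      rwa [show (((b.1.natAbs / 2 : ℕ) : ℚ) + 1) * wt D d (i+2)
          = γ + 0 - (2 * (d (i+1) : ℚ) / (D : ℚ) - 1) from by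
        rw [← hd, deg_on1 hD hsum i hp hs]; rfl] at this
  · show IsHomogMap (D := D) (d := d)
      (fun _ : Fin 1 => 2 * (d i : ℚ) / (D : ℚ) - 1) (fun _ : Fin 1 => (0:ℚ)) γ
      (mM ((PhiP i x).2.2.2))
    refine isHomogMap_mM ?_
    rw [PhiP_222]
    refine Submodule.finsuppSum_mem _ _ _ _ fun b hb => ?_
    obtain ⟨hp, hd⟩ := hkey b (Finsupp.mem_support_iff.mpr hb)
    rw [algebraMap_eq, ← smul_eq_C_mul]
    refine Submodule.smul_mem _ _ ?_
    by_cases hs : 0 < b.1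
    · rw [w4_op i hp hs]
      have := Submodule.neg_mem _ (negX_pow_mem (D := D) (d := d) (i+1) (b.1.natAbs / 2))
      rwa [show ((b.1.natAbs / 2 : ℕ) : ℚ) * wt D d (i+1)
          = γ + (2 * (d i : ℚ) / (D : ℚ) - 1) - 0 from by
        rw [← hd, deg_op0 hD hsum i hp hs]; rfl] at this
    · rw [w4_on i hp hs]
      have := Submodule.neg_mem _ (negX_pow_mem (D := D) (d := d) (i+2) (b.1.natAbs / 2))
      rwa [show ((b.1.natAbs / 2 : ℕ) : ℚ) * wt D d (i+2)
          = γ + (2 * (d i : ℚ) / (D : ℚ) - 1) - 0 from by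
        rw [← hd, deg_on0 hD hsum i hp hs]; rfl] at this

end Aux8
section Aux9

variable {D : ℕ} {d : ZMod 3 → ℤ} (hD : 1 ≤ D) (hsum : d 0 + d 1 + d 2 = (D : ℤ))

lemma coeff_mul_X_zero {μ : ZMod 3 →₀ ℕ} {s : ZMod 3} (h : μ s = 0) (p : R3) :
    coeff μ (p * X s) = 0 := by
  rw [coeff_mul_X', if_neg (by simp [Finsupp.mem_support_iff, h])]

lemma coeff_X_mul_zero {μ : ZMod 3 →₀ ℕ} {s : ZMod 3} (h : μ s = 0) (p : R3) :
    coeff μ (X s * p) = 0 := by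
  rw [coeff_X_mul', if_neg (by simp [Finsupp.mem_support_iff, h])]

lemma coeff_negX_pow (t' : ZMod 3) (a' : ℕ) (μ : ZMod 3 →₀ ℕ) :
    coeff μ ((-X t' : R3)^a')
      = (-1 : ℂ)^a' * (if Finsupp.single t' a' = μ then 1 else 0) := by
  rw [show (-X t' : R3) ^ a' = C ((-1 : ℂ)^a') * X t' ^ a' from by
    rw [map_pow, map_neg, map_one]; ring]
  rw [coeff_C_mul, X_pow_eq_monomial, coeff_monomial]

lemma coeff_sum_single {i j : ZMod 3} (x : AHom 3 ℂ i j) (b : {c : ℤ // tau 3 i c = j})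
    (μ : ZMod 3 →₀ ℕ) (F : {c : ℤ // tau 3 i c = j} → R3)
    (hF : ∀ b' : {c : ℤ // tau 3 i c = j}, b' ≠ b → coeff μ (F b') = 0) :
    coeff μ (x.sum fun b' c => algebraMap ℂ R3 c * F b') = x b * coeff μ (F b) := by
  unfold Finsupp.sum
  rw [coeff_sum]
  have hterm : ∀ b' ∈ x.support, coeff μ (algebraMap ℂ R3 (x b') * F b')
      = x b' * coeff μ (F b') := fun b' _ => by rw [algebraMap_eq, coeff_C_mul]
  rw [Finset.sum_congr rfl hterm]
  by_cases hmem : b ∈ x.support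
  · exact Finset.sum_eq_single b (fun b' _ hne => by rw [hF b' hne, mul_zero])
      (fun hnot => absurd hmem hnot)
  · rw [Finset.sum_eq_zero (fun b' hb' => ?_), Finsupp.notMem_support_iff.mp hmem, zero_mul]
    rcases eq_or_ne b' b with rfl | hne
    · rw [Finsupp.notMem_support_iff.mp hmem, zero_mul]
    · rw [hF b' hne, mul_zero]

/-- The exponent map on even codes is injective. -/
lemma even_code_inj (i : ZMod 3) {m m' : ℤ} (h : m % 2 = 0) (h' : m' % 2 = 0)
    (heq : Finsupp.single (if 0 < m' then i+1 else i+2) (m'.natAbs / 2)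
      = Finsupp.single (if 0 < m then i+1 else i+2) (m.natAbs / 2)) : m' = m := by
  rcases Finsupp.single_eq_single_iff _ _ _ _ |>.mp heq with ⟨ht, ha⟩ | ⟨ha, ha'⟩
  · by_cases s : 0 < m <;> by_cases s' : 0 < m'
    · rw [if_pos s, if_pos s'] at ht; omega
    · rw [if_pos s, if_neg s'] at ht; exact absurd ht.symm (z3_ne12 i)
    · rw [if_neg s, if_pos s'] at ht; exact absurd ht (z3_ne12 i)
    · rw [if_neg s, if_neg s'] at ht; omega
  · omega

/-- Item 10 : `Φ` is injective on cohomology. -/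
lemma Phi_inj (i j : ZMod 3) (x : AHom 3 ℂ i j)
    (h : IsCob (Phi D d hD hsum i j x)) : x = 0 := by
  obtain ⟨heven, hodd⟩ := isCob_mk4_elim hD hsum i j h
  ext b
  obtain ⟨m, hm⟩ := b
  by_contra hne
  rw [Finsupp.coe_zero, Pi.zero_apply] at hne
  by_cases hp : m % 2 = 0
  · -- even code : j = i, use the even equation
    have hji : j = i := by rw [← hm, tau_even hp]
    subst hji
    obtain ⟨g₁, g₀, h1, -⟩ := heven
    set a := m.natAbs / 2 with ha
    set t : ZMod 3 := if 0 < m then j+1 else j+2 with htdef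
    have htj : t ≠ j := by
      rw [htdef]; split_ifs
      · exact z3_ne1 j
      · exact z3_ne2 j
    set μ := Finsupp.single t a with hμ
    have hL : coeff μ ((PhiP j x).1) = x ⟨m, hm⟩ * (-1 : ℂ)^a := by
      rw [PhiP_1]
      rw [coeff_sum_single x ⟨m, hm⟩ μ _ ?hF]
      case hF =>
        intro b' hne'
        obtain ⟨m', hm'⟩ := b'
        have hp' : m' % 2 = 0 := by
          by_contra hodd'
          by_cases hs' : 0 < m'
          · exact z3_ne2 j (by rw [← tau_odd_pos hodd' hs', hm'])
          · exact z3_ne1 j (by rw [← tau_odd_neg hodd' hs', hm'])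
        by_cases hs' : 0 < m'
        · rw [w4_ep j hp' hs', coeff_negX_pow, if_neg, mul_zero]
          intro hc
          exact hne' (Subtype.ext (even_code_inj j hp hp'
            (by rw [hμ, htdef] at hc; rw [if_pos hs']; exact hc)))
        · rw [w4_en j hp' hs', coeff_negX_pow, if_neg, mul_zero]
          intro hc
          exact hne' (Subtype.ext (even_code_inj j hp hp'
            (by rw [hμ, htdef] at hc; rw [if_neg hs']; exact hc)))
      · by_cases hs : 0 < m
        · rw [w4_ep j hp hs, coeff_negX_pow, if_pos (by rw [hμ, htdef, if_pos hs]), mul_one,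
            mul_comm]
        · rw [w4_en j hp hs, coeff_negX_pow, if_pos (by rw [hμ, htdef, if_neg hs]), mul_one,
            mul_comm]
    have hR : coeff μ (X j * g₁ + g₀ * (X (j+1) * X (j+2))) = 0 := by
      rw [coeff_add, coeff_X_mul_zero (by rw [hμ, Finsupp.single_apply, if_neg htj]), zero_add]
      by_cases hs : 0 < m
      · rw [show g₀ * (X (j+1) * X (j+2)) = g₀ * X (j+1) * X (j+2) from by ring,
          coeff_mul_X_zero (by
            rw [hμ, htdef, if_pos hs, Finsupp.single_apply, if_neg (z3_ne12 j)])]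
      · rw [show g₀ * (X (j+1) * X (j+2)) = g₀ * X (j+2) * X (j+1) from by ring,
          coeff_mul_X_zero (by
            rw [hμ, htdef, if_neg hs, Finsupp.single_apply,
              if_neg (fun hc => z3_ne12 j hc.symm)])]
    rw [h1, hR] at hL
    have : x ⟨m, hm⟩ = 0 := by
      have hcalc := hL.symm
      rcases mul_eq_zero.mp hcalc with hc | hc
      · exact hc
      · exact absurd hc (pow_ne_zero _ (by norm_num))
    exact hne this
  · -- odd code, use the odd equation for `o₀`
    obtain ⟨f₁, f₀, -, h0⟩ := hodd
    set a := m.natAbs / 2 with ha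
    by_cases hs : 0 < m
    · have hji : j = i + 2 := by rw [← hm, tau_odd_pos hp hs]
      subst hji
      set μ := Finsupp.single (i+1) a with hμ
      have hL : coeff μ ((PhiP i x).2.2.2) = x ⟨m, hm⟩ * (-(-1 : ℂ)^a) := by
        rw [PhiP_222]
        rw [coeff_sum_single x ⟨m, hm⟩ μ _ ?hF2]
        case hF2 =>
          intro b' hne'
          obtain ⟨m', hm'⟩ := b'
          have hp' : ¬ m' % 2 = 0 := by
            intro he'
            rw [tau_even he'] at hm'
            exact z3_ne2 i hm'.symm
          have hs' : 0 < m' := by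
            by_contra hs'
            rw [tau_odd_neg hp' hs'] at hm'
            exact z3_ne12 i hm'
          rw [w4_op i hp' hs', coeff_neg, coeff_negX_pow, if_neg, mul_zero, neg_zero]
          intro hc
          refine hne' (Subtype.ext ?_)
          show m' = m
          have : m'.natAbs / 2 = a :=
            (Finsupp.single_eq_single_iff _ _ _ _ |>.mp hc).elim (fun h => h.2)
              (fun h => by omega)
          omega
        · rw [w4_op i hp hs, coeff_neg, coeff_negX_pow, if_pos rfl, mul_one, mul_comm, neg_mul,
            ← mul_neg, mul_comm]
      have hR : coeff μ (X (i+2) * f₀ - f₁ * X i) = 0 := by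
        rw [coeff_sub,
          coeff_X_mul_zero (by rw [hμ, Finsupp.single_apply, if_neg (z3_ne12 i)]),
          coeff_mul_X_zero (by rw [hμ, Finsupp.single_apply, if_neg (z3_ne1 i)]), sub_zero]
      rw [h0, hR] at hL
      rcases mul_eq_zero.mp hL.symm with hc | hc
      · exact hne hc
      · exact absurd hc (neg_ne_zero.mpr (pow_ne_zero _ (by norm_num)))
    · have hji : j = i + 1 := by rw [← hm, tau_odd_neg hp hs]
      subst hji
      set μ := Finsupp.single (i+2) a with hμ
      have hL : coeff μ ((PhiP i x).2.2.2) = x ⟨m, hm⟩ * (-(-1 : ℂ)^a) := by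
        rw [PhiP_222]
        rw [coeff_sum_single x ⟨m, hm⟩ μ _ ?hF3]
        case hF3 =>
          intro b' hne'
          obtain ⟨m', hm'⟩ := b'
          have hp' : ¬ m' % 2 = 0 := by
            intro he'
            rw [tau_even he'] at hm'
            exact z3_ne1 i hm'.symm
          have hs' : ¬ 0 < m' := by
            intro hs'
            rw [tau_odd_pos hp' hs'] at hm'
            exact z3_ne12 i hm'.symm
          rw [w4_on i hp' hs', coeff_neg, coeff_negX_pow, if_neg, mul_zero, neg_zero]
          intro hc
          refine hne' (Subtype.ext ?_)
          show m' = m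
          have : m'.natAbs / 2 = a :=
            (Finsupp.single_eq_single_iff _ _ _ _ |>.mp hc).elim (fun h => h.2)
              (fun h => by omega)
          omega
        · rw [w4_on i hp hs, coeff_neg, coeff_negX_pow, if_pos rfl, mul_one, mul_comm, neg_mul,
            ← mul_neg, mul_comm]
      have hR : coeff μ (X (i+1) * f₀ - f₁ * X i) = 0 := by
        rw [coeff_sub,
          coeff_X_mul_zero (by
            rw [hμ, Finsupp.single_apply, if_neg (fun hc => z3_ne12 i hc.symm)]),
          coeff_mul_X_zero (by rw [hμ, Finsupp.single_apply, if_neg (z3_ne2 i)]), sub_zero]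
      rw [h0, hR] at hL
      rcases mul_eq_zero.mp hL.symm with hc | hc
      · exact hne hc
      · exact absurd hc (neg_ne_zero.mpr (pow_ne_zero _ (by norm_num)))

end Aux9
section Aux10

variable {D : ℕ} {d : ZMod 3 → ℤ} (hD : 1 ≤ D) (hsum : d 0 + d 1 + d 2 = (D : ℤ))

lemma zmod3_cover : ∀ i t : ZMod 3, t = i ∨ t = i + 1 ∨ t = i + 2 := by decide

lemma R3_induction {P : R3 → Prop} (h0 : P 0) (hadd : ∀ p q, P p → P q → P (p + q))
    (hmono : ∀ μ c, P (monomial μ c)) (f : R3) : P f := by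
  rw [f.as_sum]
  exact Finset.sum_induction _ P hadd h0 (fun μ _ => hmono μ _)

lemma mu_split1 (i : ZMod 3) (μ : ZMod 3 →₀ ℕ) (h : μ i = 0) (h' : μ (i+2) = 0) :
    μ = Finsupp.single (i+1) (μ (i+1)) := by
  ext u
  rcases zmod3_cover i u with rfl | rfl | rfl
  · rw [h, Finsupp.single_apply, if_neg (z3_ne1 u)]
  · rw [Finsupp.single_apply, if_pos rfl]
  · rw [h', Finsupp.single_apply, if_neg (fun hc => z3_ne12 _ hc)]

lemma mu_split2 (i : ZMod 3) (μ : ZMod 3 →₀ ℕ) (h : μ i = 0) (h' : μ (i+1) = 0) :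
    μ = Finsupp.single (i+2) (μ (i+2)) := by
  ext u
  rcases zmod3_cover i u with rfl | rfl | rfl
  · rw [h, Finsupp.single_apply, if_neg (z3_ne2 u)]
  · rw [h', Finsupp.single_apply, if_neg (fun hc => z3_ne12 _ hc.symm)]
  · rw [Finsupp.single_apply, if_pos rfl]

lemma X_eq_monomial (s : ZMod 3) : (X s : R3) = monomial (Finsupp.single s 1) 1 := by
  rw [← X_pow_eq_monomial, pow_one]

lemma monomial_X_factor (s : ZMod 3) (μ : ZMod 3 →₀ ℕ) (c : ℂ) (h : μ s ≠ 0) :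
    monomial μ c = X s * monomial (μ - Finsupp.single s 1) c := by
  have hμ : Finsupp.single s 1 + (μ - Finsupp.single s 1) = μ := by
    ext u
    rw [Finsupp.add_apply, Finsupp.tsub_apply]
    rcases eq_or_ne s u with rfl | hne
    · rw [Finsupp.single_apply, if_pos rfl]
      omega
    · rw [Finsupp.single_apply, if_neg hne]
      omega
  rw [X_eq_monomial, monomial_mul, one_mul, hμ]

lemma X_dvd_of_coeff {s : ZMod 3} {p : R3} (h : ∀ μ : ZMod 3 →₀ ℕ, μ s = 0 → coeff μ p = 0) :
    X s ∣ p := by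
  rw [X_dvd_iff_modMonomial_eq_zero, eq_zero_iff]
  intro μ
  by_cases hle : Finsupp.single s 1 ≤ μ
  · rw [coeff_modMonomial_of_le _ hle]
  · rw [coeff_modMonomial_of_not_le _ hle]
    refine h μ ?_
    by_contra hc
    exact hle (Finsupp.single_le_iff.mpr (by omega))

lemma dvd_cancel {s t : ZMod 3} (hst : s ≠ t) {p q : R3} (h : X t * p = X s * q) :
    X s ∣ p := by
  refine X_dvd_of_coeff fun μ hμ => ?_
  have h1 : coeff (Finsupp.single t 1 + μ) (X t * p) = coeff μ p := coeff_X_mul μ t p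
  have h2 : coeff (Finsupp.single t 1 + μ) (X s * q) = 0 := by
    refine coeff_X_mul_zero ?_ q
    rw [Finsupp.add_apply, Finsupp.single_apply, if_neg (fun hc => hst hc.symm), hμ]
  rw [← h1, h, h2]

lemma sign_scalar (n : ℕ) (c : ℂ) (t : ZMod 3) :
    (algebraMap ℂ R3) ((-1)^n * c) • ((-X t : R3))^n = monomial (Finsupp.single t n) c := by
  rw [algebraMap_eq, show ((-X t : R3))^n = C ((-1 : ℂ)^n) * X t ^ n from by
    rw [map_pow, map_neg, map_one]; ring]
  rw [smul_eq_mul, ← mul_assoc, ← map_mul,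
    show ((-1 : ℂ)^n * c) * (-1 : ℂ)^n = c from by
      rw [mul_comm, ← mul_assoc, ← mul_pow]; norm_num,
    C_mul_X_pow_eq_monomial]

lemma sign_scalar_neg (n : ℕ) (c : ℂ) (t : ZMod 3) :
    (algebraMap ℂ R3) (-(-1)^n * c) • (-((-X t : R3))^n) = monomial (Finsupp.single t n) c := by
  rw [show (-(-1 : ℂ)^n * c) = -((-1)^n * c) from by ring, map_neg, neg_smul, smul_neg,
    neg_neg]
  exact sign_scalar n c t

lemma w4_even_pos' (i : ZMod 3) (n : ℕ) :
    w4 i (2 * n : ℤ) = ((-X (i+1))^n, (-X (i+1))^n, 0, 0) := by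
  rcases Nat.eq_zero_or_pos n with rfl | hn
  · norm_num [w4_zero]
  · rw [w4_ep i (by omega) (by positivity),
      show ((2 * (n:ℤ)).natAbs) / 2 = n from by omega]

lemma w4_even_neg' (i : ZMod 3) (n : ℕ) :
    w4 i (-(2 * n : ℤ)) = ((-X (i+2))^n, (-X (i+2))^n, 0, 0) := by
  rw [w4_en i (by omega) (by omega),
    show ((-(2 * (n:ℤ))).natAbs) / 2 = n from by omega]

lemma w4_odd_pos' (i : ZMod 3) (n : ℕ) :
    w4 i (2 * n + 1 : ℤ) = (0, 0, X (i+1) * (-X (i+1))^n, -(-X (i+1))^n) := by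
  rw [w4_op i (by omega) (by positivity),
    show ((2 * (n:ℤ) + 1).natAbs) / 2 = n from by omega]

lemma w4_odd_neg' (i : ZMod 3) (n : ℕ) :
    w4 i (-(2 * n + 1) : ℤ) = (0, 0, X (i+2) * (-X (i+2))^n, -(-X (i+2))^n) := by
  rw [w4_on i (by omega) (by omega),
    show ((-(2 * (n:ℤ) + 1)).natAbs) / 2 = n from by omega]

/-- Decomposition of a polynomial : even case (`j = i`). -/
lemma decompEven (i : ZMod 3) (f : R3) :
    ∃ (x : AHom 3 ℂ i i) (g₁ g₀ : R3),
      f = (PhiP i x).1 + (X i * g₁ + g₀ * (X (i+1) * X (i+2))) ∧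
      (PhiP i x).2.1 = (PhiP i x).1 ∧ (PhiP i x).2.2.1 = 0 ∧ (PhiP i x).2.2.2 = 0 := by
  induction f using R3_induction with
  | h0 => exact ⟨0, 0, 0, by simp [PhiP_zero], by simp [PhiP_zero], by simp [PhiP_zero],
      by simp [PhiP_zero]⟩
  | hadd p q hp hq =>
      obtain ⟨x, g₁, g₀, he, h21, h221, h222⟩ := hp
      obtain ⟨x', g₁', g₀', he', h21', h221', h222'⟩ := hq
      refine ⟨x + x', g₁ + g₁', g₀ + g₀', ?_, ?_, ?_, ?_⟩ <;>
        rw [PhiP_add] <;>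
        simp only [Prod.fst_add, Prod.snd_add]
      · rw [he, he']; ring
      · rw [h21, h21']
      · rw [h221, h221', add_zero]
      · rw [h222, h222', add_zero]
  | hmono μ c =>
      by_cases h0 : μ i ≠ 0
      · refine ⟨0, monomial (μ - Finsupp.single i 1) c, 0, ?_, by simp [PhiP_zero],
          by simp [PhiP_zero], by simp [PhiP_zero]⟩
        rw [PhiP_zero, monomial_X_factor i μ c h0]
        simp only [Prod.fst_zero]
        ring
      push_neg at h0
      by_cases h1 : μ (i+1) = 0
      · -- μ = single (i+2) n, code `-(2n)`
        set n := μ (i+2) with hn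
        have hμ : μ = Finsupp.single (i+2) n := mu_split2 i μ h0 h1
        have hcode : tau 3 i (-(2 * n : ℤ)) = i := tau_even (by omega)
        refine ⟨Finsupp.single ⟨(-(2 * n : ℤ)), hcode⟩ ((-1)^n * c), 0, 0, ?_, ?_, ?_, ?_⟩
        · rw [PhiP_single]
          have hs := sign_scalar n c (i+2)
          rw [smul_eq_mul] at hs
          rw [hμ, ← hs]
          simp only [w4_even_neg', Prod.smul_fst, smul_eq_mul]
          ring
        · rw [PhiP_single]
          simp only [w4_even_neg', Prod.smul_fst, Prod.smul_snd]
        · rw [PhiP_single]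
          simp only [w4_even_neg', Prod.smul_fst, Prod.smul_snd, smul_zero]
        · rw [PhiP_single]
          simp only [w4_even_neg', Prod.smul_fst, Prod.smul_snd, smul_zero]
      by_cases h2 : μ (i+2) = 0
      · -- μ = single (i+1) n, code `2n`
        set n := μ (i+1) with hn
        have hμ : μ = Finsupp.single (i+1) n := mu_split1 i μ h0 h2
        have hcode : tau 3 i (2 * n : ℤ) = i := tau_even (by omega)
        refine ⟨Finsupp.single ⟨(2 * n : ℤ), hcode⟩ ((-1)^n * c), 0, 0, ?_, ?_, ?_, ?_⟩
        · rw [PhiP_single]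
          have hs := sign_scalar n c (i+1)
          rw [smul_eq_mul] at hs
          rw [hμ, ← hs]
          simp only [w4_even_pos', Prod.smul_fst, smul_eq_mul]
          ring
        · rw [PhiP_single]
          simp only [w4_even_pos', Prod.smul_fst, Prod.smul_snd]
        · rw [PhiP_single]
          simp only [w4_even_pos', Prod.smul_fst, Prod.smul_snd, smul_zero]
        · rw [PhiP_single]
          simp only [w4_even_pos', Prod.smul_fst, Prod.smul_snd, smul_zero]
      · -- both variables occur : in the ideal
        refine ⟨0, 0, monomial (μ - Finsupp.single (i+1) 1 - Finsupp.single (i+2) 1) c, ?_,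
          by simp [PhiP_zero], by simp [PhiP_zero], by simp [PhiP_zero]⟩
        rw [PhiP_zero]
        simp only [Prod.fst_zero]
        have hstep : monomial μ c
            = X (i+1) * (X (i+2) * monomial (μ - Finsupp.single (i+1) 1 - Finsupp.single (i+2) 1) c) := by
          rw [← monomial_X_factor (i+2) _ c (by
            rw [Finsupp.tsub_apply, Finsupp.single_apply, if_neg (fun hc => z3_ne12 i hc)]
            omega)]
          exact monomial_X_factor (i+1) μ c h1
        rw [hstep]
        ring
  
/-- Decomposition of a polynomial : odd case towards `i+1`. -/
lemma decompOddNeg (i : ZMod 3) (g : R3) :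
    ∃ (x : AHom 3 ℂ i (i+1)) (f₁ f₀ : R3),
      g = (PhiP i x).2.2.2 + (X (i+1) * f₀ - f₁ * X i) ∧
      (PhiP i x).1 = 0 ∧ (PhiP i x).2.1 = 0 ∧
      (PhiP i x).2.2.1 = -X (i+2) * (PhiP i x).2.2.2 := by
  induction g using R3_induction with
  | h0 => exact ⟨0, 0, 0, by simp [PhiP_zero], by simp [PhiP_zero], by simp [PhiP_zero],
      by simp [PhiP_zero]⟩
  | hadd p q hp hq =>
      obtain ⟨x, f₁, f₀, he, h1, h21, h221⟩ := hp
      obtain ⟨x', f₁', f₀', he', h1', h21', h221'⟩ := hq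
      refine ⟨x + x', f₁ + f₁', f₀ + f₀', ?_, ?_, ?_, ?_⟩ <;>
        rw [PhiP_add] <;>
        simp only [Prod.fst_add, Prod.snd_add]
      · rw [he, he']; ring
      · rw [h1, h1', add_zero]
      · rw [h21, h21', add_zero]
      · rw [h221, h221']; ring
  | hmono μ c =>
      by_cases h0 : μ i ≠ 0
      · refine ⟨0, -(monomial (μ - Finsupp.single i 1) c), 0, ?_, by simp [PhiP_zero],
          by simp [PhiP_zero], by simp [PhiP_zero]⟩
        rw [PhiP_zero, monomial_X_factor i μ c h0]
        simp only [Prod.snd_zero]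
        ring
      push_neg at h0
      by_cases h1 : μ (i+1) ≠ 0
      · refine ⟨0, 0, monomial (μ - Finsupp.single (i+1) 1) c, ?_, by simp [PhiP_zero],
          by simp [PhiP_zero], by simp [PhiP_zero]⟩
        rw [PhiP_zero, monomial_X_factor (i+1) μ c h1]
        simp only [Prod.snd_zero]
        ring
      push_neg at h1
      -- μ = single (i+2) n, code `-(2n+1)`
      set n := μ (i+2) with hn
      have hμ : μ = Finsupp.single (i+2) n := mu_split2 i μ h0 h1
      have hcode : tau 3 i (-(2 * n + 1) : ℤ) = i + 1 := tau_odd_neg (by omega) (by omega)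
      refine ⟨Finsupp.single ⟨(-(2 * n + 1) : ℤ), hcode⟩ (-(-1)^n * c), 0, 0, ?_, ?_, ?_, ?_⟩
      · rw [PhiP_single]
        have hs := sign_scalar_neg n c (i+2)
        rw [smul_eq_mul] at hs
        rw [hμ, ← hs]
        simp only [w4_odd_neg', Prod.smul_snd, smul_eq_mul]
        ring
      · rw [PhiP_single]
        simp only [w4_odd_neg', Prod.smul_fst, Prod.smul_snd, smul_zero]
      · rw [PhiP_single]
        simp only [w4_odd_neg', Prod.smul_fst, Prod.smul_snd, smul_zero]
      · rw [PhiP_single]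
        simp only [w4_odd_neg', Prod.smul_fst, Prod.smul_snd, smul_eq_mul]
        ring

/-- Decomposition of a polynomial : odd case towards `i+2`. -/
lemma decompOddPos (i : ZMod 3) (g : R3) :
    ∃ (x : AHom 3 ℂ i (i+2)) (f₁ f₀ : R3),
      g = (PhiP i x).2.2.2 + (X (i+2) * f₀ - f₁ * X i) ∧
      (PhiP i x).1 = 0 ∧ (PhiP i x).2.1 = 0 ∧
      (PhiP i x).2.2.1 = -X (i+1) * (PhiP i x).2.2.2 := by
  induction g using R3_induction with
  | h0 => exact ⟨0, 0, 0, by simp [PhiP_zero], by simp [PhiP_zero], by simp [PhiP_zero],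
      by simp [PhiP_zero]⟩
  | hadd p q hp hq =>
      obtain ⟨x, f₁, f₀, he, h1, h21, h221⟩ := hp
      obtain ⟨x', f₁', f₀', he', h1', h21', h221'⟩ := hq
      refine ⟨x + x', f₁ + f₁', f₀ + f₀', ?_, ?_, ?_, ?_⟩ <;>
        rw [PhiP_add] <;>
        simp only [Prod.fst_add, Prod.snd_add]
      · rw [he, he']; ring
      · rw [h1, h1', add_zero]
      · rw [h21, h21', add_zero]
      · rw [h221, h221']; ring
  | hmono μ c =>
      by_cases h0 : μ i ≠ 0
      · refine ⟨0, -(monomial (μ - Finsupp.single i 1) c), 0, ?_, by simp [PhiP_zero],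
          by simp [PhiP_zero], by simp [PhiP_zero]⟩
        rw [PhiP_zero, monomial_X_factor i μ c h0]
        simp only [Prod.snd_zero]
        ring
      push_neg at h0
      by_cases h2 : μ (i+2) ≠ 0
      · refine ⟨0, 0, monomial (μ - Finsupp.single (i+2) 1) c, ?_, by simp [PhiP_zero],
          by simp [PhiP_zero], by simp [PhiP_zero]⟩
        rw [PhiP_zero, monomial_X_factor (i+2) μ c h2]
        simp only [Prod.snd_zero]
        ring
      push_neg at h2
      -- μ = single (i+1) n, code `2n+1`
      set n := μ (i+1) with hn
      have hμ : μ = Finsupp.single (i+1) n := mu_split1 i μ h0 h2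
      have hcode : tau 3 i (2 * n + 1 : ℤ) = i + 2 := by
        rw [tau_odd_pos (by omega) (by positivity)]
      refine ⟨Finsupp.single ⟨(2 * n + 1 : ℤ), hcode⟩ (-(-1)^n * c), 0, 0, ?_, ?_, ?_, ?_⟩
      · rw [PhiP_single]
        have hs := sign_scalar_neg n c (i+1)
        rw [smul_eq_mul] at hs
        rw [hμ, ← hs]
        simp only [w4_odd_pos', Prod.smul_snd, smul_eq_mul]
        ring
      · rw [PhiP_single]
        simp only [w4_odd_pos', Prod.smul_fst, Prod.smul_snd, smul_zero]
      · rw [PhiP_single]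
        simp only [w4_odd_pos', Prod.smul_fst, Prod.smul_snd, smul_zero]
      · rw [PhiP_single]
        simp only [w4_odd_pos', Prod.smul_fst, Prod.smul_snd, smul_eq_mul]
        ring

end Aux10
section Aux11

variable {D : ℕ} {d : ZMod 3 → ℤ} (hD : 1 ≤ D) (hsum : d 0 + d 1 + d 2 = (D : ℤ))

/-- Item 11 : `Φ` is surjective on cohomology. -/
lemma Phi_surj (i j : ZMod 3) (z : MMaps (TT D d hD hsum i) (TT D d hD hsum j))
    (hz : IsCycle z) : ∃ x : AHom 3 ℂ i j, IsCob (z - Phi D d hD hsum i j x) := by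
  obtain ⟨e₁, e₀, o₁, o₀, rfl⟩ := eq_mk4 hD hsum i j z
  obtain ⟨h1, h2, h3, h4⟩ := isCycle_mk4_elim hD hsum i j hz
  have hXne : ∀ t : ZMod 3, (X t : R3) ≠ 0 := fun t => X_ne_zero t
  rcases zmod3_cover i j with hji | hji | hji
  · -- case j = i
    subst hji
    -- even part : e₁ = e₀
    have hee : e₁ = e₀ := by
      have hcan : (X (j+1) * X (j+2)) * e₁ = (X (j+1) * X (j+2)) * e₀ := by
        linear_combination h1
      exact mul_left_cancel₀ (mul_ne_zero (hXne _) (hXne _)) hcan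
    -- odd part : X j ∣ o₀
    have hs1 : X (j+1) * (X (j+2) * (-o₀)) = X j * o₁ := by linear_combination -h3
    obtain ⟨w, hw⟩ := dvd_cancel (fun hc => z3_ne1 j hc.symm) hs1
    have hs2 : X (j+2) * (-o₀) = X j * w := hw
    obtain ⟨h', hh'⟩ := dvd_cancel (fun hc => z3_ne2 j hc.symm) hs2
    -- so o₀ = - X j * h' and o₁ = h' * (X (j+1) * X (j+2))
    have ho₀ : o₀ = -(X j * h') := by linear_combination -hh'
    have ho₁ : o₁ = h' * (X (j+1) * X (j+2)) := by
      have : X j * o₁ = X j * (h' * (X (j+1) * X (j+2))) := by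
        linear_combination h3 - (X (j+1)) * (X (j+2)) * ho₀
      exact mul_left_cancel₀ (hXne j) this
    obtain ⟨x, g₁, g₀, he, hx21, hx221, hx222⟩ := decompEven j e₁
    refine ⟨x, ?_⟩
    rw [show Phi D d hD hsum j j x = mk4 D d hD hsum j j (PhiP j x).1 (PhiP j x).2.1
        (PhiP j x).2.2.1 (PhiP j x).2.2.2 from rfl, ← mk4_sub]
    refine isCob_mk4 hD hsum j j g₁ g₀ h' 0 ?_ ?_ ?_ ?_
    · linear_combination he
    · rw [hx21, ← hee]
      linear_combination he
    · rw [hx221]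
      linear_combination ho₁
    · rw [hx222]
      linear_combination ho₀
  · -- case j = i + 1
    subst hji
    rw [z3_11, z3_12] at h1 h4
    -- even part
    have hcan : X (i+2) * (X i * e₁) = X (i+2) * (X (i+1) * e₀) := by linear_combination h1
    have he10 : X i * e₁ = X (i+1) * e₀ := mul_left_cancel₀ (hXne _) hcan
    obtain ⟨h', hh'⟩ := dvd_cancel (fun hc => z3_ne1 i hc) he10
    have he₀ : e₀ = X i * h' := by
      have : X (i+1) * e₀ = X (i+1) * (X i * h') := by linear_combination -he10 + (X i) * hh'
      exact mul_left_cancel₀ (hXne _) this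
    -- odd part
    have hcan2 : X (i+1) * o₁ = X (i+1) * (-X (i+2) * o₀) := by linear_combination h3
    have ho₁ : o₁ = -X (i+2) * o₀ := mul_left_cancel₀ (hXne _) hcan2
    obtain ⟨x, f₁, f₀, hg, hx1, hx21, hx221⟩ := decompOddNeg i o₀
    refine ⟨x, ?_⟩
    rw [show Phi D d hD hsum i (i+1) x = mk4 D d hD hsum i (i+1) (PhiP i x).1 (PhiP i x).2.1
        (PhiP i x).2.2.1 (PhiP i x).2.2.2 from rfl, ← mk4_sub]
    refine isCob_mk4 hD hsum i (i+1) h' 0 f₁ f₀ ?_ ?_ ?_ ?_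
    · rw [hx1]
      linear_combination hh'
    · rw [hx21, z3_11, z3_12]
      linear_combination he₀
    · rw [hx221, z3_11, z3_12, ho₁]
      linear_combination -(X (i+2)) * hg
    · rw [hg]
      ring
  · -- case j = i + 2
    subst hji
    rw [z3_21, z3_22] at h1 h4
    -- even part
    have hcan : X (i+1) * (X i * e₁) = X (i+1) * (X (i+2) * e₀) := by linear_combination h1
    have he10 : X i * e₁ = X (i+2) * e₀ := mul_left_cancel₀ (hXne _) hcan
    obtain ⟨h', hh'⟩ := dvd_cancel (fun hc => z3_ne2 i hc) he10
    have he₀ : e₀ = X i * h' := by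
      have : X (i+2) * e₀ = X (i+2) * (X i * h') := by linear_combination -he10 + (X i) * hh'
      exact mul_left_cancel₀ (hXne _) this
    -- odd part
    have hcan2 : X (i+2) * o₁ = X (i+2) * (-X (i+1) * o₀) := by linear_combination h3
    have ho₁ : o₁ = -X (i+1) * o₀ := mul_left_cancel₀ (hXne _) hcan2
    obtain ⟨x, f₁, f₀, hg, hx1, hx21, hx221⟩ := decompOddPos i o₀
    refine ⟨x, ?_⟩
    rw [show Phi D d hD hsum i (i+2) x = mk4 D d hD hsum i (i+2) (PhiP i x).1 (PhiP i x).2.1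
        (PhiP i x).2.2.1 (PhiP i x).2.2.2 from rfl, ← mk4_sub]
    refine isCob_mk4 hD hsum i (i+2) h' 0 f₁ f₀ ?_ ?_ ?_ ?_
    · rw [hx1]
      linear_combination hh'
    · rw [hx21, z3_21, z3_22]
      linear_combination he₀
    · rw [hx221, z3_21, z3_22, ho₁]
      linear_combination -(X (i+1)) * hg
    · rw [hg]
      ring

end Aux11
/-- Homological mirror symmetry ingredient (Proposition 6.2 of the paper): for
`d₁ + d₂ + d₃ = D ≥ 1`, setting `pᵢ = 2dᵢ + 2d_{i+1} - D` and
`qᵢ = 2d_{i-2} + 2d_{i-1} - D`, there is an equivalence of `(1/D)ℤ`-graded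
categories `A_{(p̃,q̃)} ≅ H^*(C_{d₁,d₂,d₃})` onto the cohomology category of the
DG category of `(1/D)ℤ`-graded matrix factorizations of `W = z₁z₂z₃` on the objects
`T₁, T₂, T₃`, sending `X_i` to `T_i`, `u_{i-1,i}` to the class of the odd closed
morphism with components (multiplication by `z_{i+1}`, multiplication by `-1`), and
`v_{i,i-1}` to the class of the odd closed morphism with components (multiplication
by `z_{i-2}`, multiplication by `-1`).  The equivalence is expressed by a linear map
`Φ` from the hom spaces of `A` to closed morphisms of matrix factorizations which
preserves degrees and parities, identities and compositions up to coboundaries, and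
induces a bijection on cohomology. -/
theorem stmt_12 (D : ℕ) (hD : 1 ≤ D) (d : ZMod 3 → ℤ)
    (hsum : d 0 + d 1 + d 2 = (D : ℤ)) :
    ∃ Φ : ∀ i j : ZMod 3, AHom 3 ℂ i j → MMaps (TT D d hD hsum i) (TT D d hD hsum j),
      (∀ (i j : ZMod 3) (x y : AHom 3 ℂ i j), Φ i j (x + y) = Φ i j x + Φ i j y) ∧
      (∀ (i j : ZMod 3) (c : ℂ) (x : AHom 3 ℂ i j),
        Φ i j (c • x) = (algebraMap ℂ R3 c) • Φ i j x) ∧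
      (∀ (i j : ZMod 3) (x : AHom 3 ℂ i j), IsCycle (Φ i j x)) ∧
      (∀ (i j : ZMod 3) (γ : ℚ) (x : AHom 3 ℂ i j),
        x ∈ grQ D (fun i' => 2 * d i' + 2 * d (i' + 1) - (D : ℤ))
          (fun i' => 2 * d (i' + 1) + 2 * d (i' + 2) - (D : ℤ)) i j (γ, 0) →
        (Φ i j x).2 = 0 ∧
        IsHomogMap (D := D) (d := d) (TT D d hD hsum i).σ₁ (TT D d hD hsum j).σ₁ γ (Φ i j x).1.1 ∧
        IsHomogMap (D := D) (d := d) (TT D d hD hsum i).σ₀ (TT D d hD hsum j).σ₀ γ (Φ i j x).1.2) ∧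
      (∀ (i j : ZMod 3) (γ : ℚ) (x : AHom 3 ℂ i j),
        x ∈ grQ D (fun i' => 2 * d i' + 2 * d (i' + 1) - (D : ℤ))
          (fun i' => 2 * d (i' + 1) + 2 * d (i' + 2) - (D : ℤ)) i j (γ, 1) →
        (Φ i j x).1 = 0 ∧
        IsHomogMap (D := D) (d := d) (TT D d hD hsum i).σ₁ (TT D d hD hsum j).σ₀ γ (Φ i j x).2.1 ∧
        IsHomogMap (D := D) (d := d) (TT D d hD hsum i).σ₀ (TT D d hD hsum j).σ₁ γ (Φ i j x).2.2) ∧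
      (∀ i : ZMod 3, IsCob (Φ i i (Aid 3 ℂ i) - idMS (TT D d hD hsum i))) ∧
      (∀ (i j l : ZMod 3) (g : AHom 3 ℂ j l) (f : AHom 3 ℂ i j),
        IsCob (Φ i l (Acomp 3 ℂ g f) - mcomp (Φ j l g) (Φ i j f))) ∧
      (∀ i : ZMod 3,
        IsCob (Φ i (i + 1) (uElem 3 ℂ i) - ((0, uMF D d hD hsum i) :
          MMaps (TT D d hD hsum i) (TT D d hD hsum (i + 1))))) ∧
      (∀ i : ZMod 3,
        IsCob (Φ i (i - 1) (vElem 3 ℂ i) - ((0, vMF D d hD hsum i) :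
          MMaps (TT D d hD hsum i) (TT D d hD hsum (i - 1))))) ∧
      (∀ (i j : ZMod 3) (x : AHom 3 ℂ i j), IsCob (Φ i j x) → x = 0) ∧
      (∀ (i j : ZMod 3) (z : MMaps (TT D d hD hsum i) (TT D d hD hsum j)),
        IsCycle z → ∃ x : AHom 3 ℂ i j, IsCob (z - Φ i j x)) := by
  refine ⟨Phi D d hD hsum, Phi_add hD hsum, Phi_smul hD hsum, Phi_isCycle hD hsum,
    Phi_grQ_even hD hsum, Phi_grQ_odd hD hsum,
    fun i => ?_, Phi_comp hD hsum, fun i => ?_, fun i => ?_,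
    Phi_inj hD hsum, Phi_surj hD hsum⟩
  · rw [Phi_Aid hD hsum i, sub_self]
    exact isCob_zero hD hsum i i
  · rw [Phi_uElem hD hsum i, sub_self]
    exact isCob_zero hD hsum i (i+1)
  · rw [Phi_vElem hD hsum i, sub_self]
    exact isCob_zero hD hsum i (i-1)

end Stmt12
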